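/- arXiv:1206.3767 — 7 statements merged into one kernel-verified Lean document; each statement's English description precedes it below -/
import Mathlib

section
/- Let n ≥ 1 and let σ denote the standard complex symplectic form on ℂ^{2n}, σ((x,ξ),(y,η)) = ξ·y − η·x. Let F ∈ ℂ^{2n×2n} satisfy σ(X, FY) = −σ(FX, Y) for all X, Y ∈ ℂ^{2n}, and set q(X) = σ(X, FX). Assume: (i) Re q(X) ≥ 0 for every X ∈ ℝ^{2n}; (ii) the only X ∈ ℝ^{2n} with (Re F)(Im F)^k X = 0 for all k = 0, 1, …, 2n−1 is X = 0, where Re F and Im F are the entrywise real and imaginary parts of F. Then F has no real eigenvalue, and, counting with algebraic multiplicity (dimension of the generalized eigenspace), F has exactly n eigenvalues λ with Im λ > 0 and exactly n eigenvalues λ with Im λ < 0. -/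
open Matrix Module Complex

/-- The standard complex symplectic form on `ℂ^(2n)`, with a point written as `(x, ξ)`
(`Sum.inl` indices for `x`, `Sum.inr` indices for `ξ`):
`σ((x,ξ),(y,η)) = ξ·y − η·x` with bilinear dot products. -/
noncomputable def sympForm (n : ℕ) (X Y : Fin n ⊕ Fin n → ℂ) : ℂ :=
  (∑ j : Fin n, X (Sum.inr j) * Y (Sum.inl j)) -
    ∑ j : Fin n, Y (Sum.inr j) * X (Sum.inl j)

namespace Stmt1Aux

variable {n : ℕ}

noncomputable def J (n : ℕ) : Matrix (Fin n ⊕ Fin n) (Fin n ⊕ Fin n) ℂ :=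
  Matrix.fromBlocks 0 (-1) 1 0

lemma J_mulVec (Y : Fin n ⊕ Fin n → ℂ) :
    J n *ᵥ Y = Sum.elim (fun j => - Y (Sum.inr j)) (fun j => Y (Sum.inl j)) := by
  have : Y = Sum.elim (fun j => Y (Sum.inl j)) (fun j => Y (Sum.inr j)) := by
    ext i; cases i <;> rfl
  rw [this, J, Matrix.fromBlocks_mulVec]
  simp [Matrix.neg_mulVec, Matrix.one_mulVec]
  rfl

lemma sympForm_eq (X Y : Fin n ⊕ Fin n → ℂ) :
    sympForm n X Y = X ⬝ᵥ (J n *ᵥ Y) := by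
  rw [J_mulVec]
  simp [sympForm, dotProduct, Fintype.sum_sum_type, mul_comm, sub_eq_add_neg,
    ← Finset.sum_neg_distrib]
  ring

lemma J_mul_J : J n * J n = -1 := by
  simp [J, Matrix.fromBlocks_multiply, ← Matrix.fromBlocks_one, Matrix.fromBlocks_neg]

end Stmt1Aux

namespace Stmt1Aux2
open Stmt1Aux

variable {n : ℕ} {F : Matrix (Fin n ⊕ Fin n) (Fin n ⊕ Fin n) ℂ}

lemma matrix_ext_of_dot {ι : Type*} [Fintype ι] [DecidableEq ι]
    {M N : Matrix ι ι ℂ} (h : ∀ X Y : ι → ℂ, X ⬝ᵥ M *ᵥ Y = X ⬝ᵥ N *ᵥ Y) : M = N := by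
  ext i j
  have := h (Pi.single i 1) (Pi.single j 1)
  simpa [Matrix.mulVec_single, single_dotProduct] using this

lemma isUnit_J_det : IsUnit (J n).det := by
  have h1 : J n * (-(J n)) = 1 := by rw [Matrix.mul_neg, J_mul_J]; simp
  exact Matrix.isUnit_det_of_right_inverse h1

lemma transpose_eq_of_skew
    (hFskew : ∀ X Y : Fin n ⊕ Fin n → ℂ,
      sympForm n X (F *ᵥ Y) = - sympForm n (F *ᵥ X) Y) :
    Fᵀ = J n * F * J n := by
  have key : J n * F = -(Fᵀ * J n) := by
    apply matrix_ext_of_dot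
    intro X Y
    have h := hFskew X Y
    rw [sympForm_eq, sympForm_eq] at h
    rw [← Matrix.mulVec_mulVec, h,
      show (F *ᵥ X) = X ᵥ* Fᵀ from (Matrix.vecMul_transpose _ _).symm,
      ← Matrix.dotProduct_mulVec, Matrix.mulVec_mulVec, Matrix.neg_mulVec,
      dotProduct_neg]
  have h2 : J n * F * J n = Fᵀ := by
    rw [key, Matrix.neg_mul, Matrix.mul_assoc, J_mul_J]
    simp
  exact h2.symm

lemma conj_step (A B : Matrix (Fin n ⊕ Fin n) (Fin n ⊕ Fin n) ℂ) :
    (J n * A * J n) * (J n * B * J n) = -(J n * (A * B) * J n) := by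
  rw [show J n * A * J n * (J n * B * J n) = J n * A * (J n * J n) * (B * J n) by
    noncomm_ring, J_mul_J]
  noncomm_ring

lemma pow_conj_J (M : Matrix (Fin n ⊕ Fin n) (Fin n ⊕ Fin n) ℂ) (k : ℕ) :
    (J n * M * J n) ^ (k + 1) = ((-1 : ℂ) ^ k) • (J n * M ^ (k + 1) * J n) := by
  induction k with
  | zero => simp
  | succ k ih =>
    rw [pow_succ, ih, Matrix.smul_mul, conj_step, ← pow_succ, smul_neg, ← neg_smul,
      ← neg_one_mul, mul_comm, ← pow_succ]

lemma rank_smul_eq (c : ℂ) (hc : c ≠ 0) (M : Matrix (Fin n ⊕ Fin n) (Fin n ⊕ Fin n) ℂ) :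
    (c • M).rank = M.rank := by
  have : c • M = (c • (1 : Matrix (Fin n ⊕ Fin n) (Fin n ⊕ Fin n) ℂ)) * M := by
    rw [Matrix.smul_mul, Matrix.one_mul]
  rw [this]
  apply Matrix.rank_mul_eq_right_of_isUnit_det
  simp [Matrix.det_smul, hc]

end Stmt1Aux2

namespace Stmt1Aux3
open Stmt1Aux Stmt1Aux2

variable {n : ℕ} {F : Matrix (Fin n ⊕ Fin n) (Fin n ⊕ Fin n) ℂ}

lemma conj_shift (μ : ℂ) :
    J n * (F + μ • 1) * J n = J n * F * J n - μ • 1 := by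
  rw [Matrix.mul_add, Matrix.add_mul, Matrix.mul_smul, Matrix.mul_one, Matrix.smul_mul,
    J_mul_J, sub_eq_add_neg, smul_neg]

lemma rank_pow_neg_eq
    (hFskew : ∀ X Y : Fin n ⊕ Fin n → ℂ,
      sympForm n X (F *ᵥ Y) = - sympForm n (F *ᵥ X) Y)
    (μ : ℂ) {d : ℕ} (hd : d ≠ 0) :
    ((F - μ • 1) ^ d).rank = ((F + μ • 1) ^ d).rank := by
  have hT := transpose_eq_of_skew hFskew
  obtain ⟨k, rfl⟩ : ∃ k, d = k + 1 := ⟨d - 1, by omega⟩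
  calc ((F - μ • 1) ^ (k + 1)).rank
      = (((F - μ • 1) ^ (k + 1))ᵀ).rank := (Matrix.rank_transpose _).symm
    _ = ((Fᵀ - μ • 1) ^ (k + 1)).rank := by
        rw [Matrix.transpose_pow, Matrix.transpose_sub, Matrix.transpose_smul,
          Matrix.transpose_one]
    _ = ((J n * (F + μ • 1) * J n) ^ (k + 1)).rank := by rw [conj_shift, hT]
    _ = (((-1 : ℂ) ^ k) • (J n * (F + μ • 1) ^ (k + 1) * J n)).rank := by rw [pow_conj_J]
    _ = ((J n * (F + μ • 1) ^ (k + 1) * J n)).rank := by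
        apply rank_smul_eq
        exact pow_ne_zero _ (by norm_num)
    _ = ((J n * (F + μ • 1) ^ (k + 1))).rank :=
        Matrix.rank_mul_eq_left_of_isUnit_det _ _ isUnit_J_det
    _ = ((F + μ • 1) ^ (k + 1)).rank :=
        Matrix.rank_mul_eq_right_of_isUnit_det _ _ isUnit_J_det

lemma maxGenEigenspace_eq_ker (μ : ℂ) :
    Module.End.maxGenEigenspace (Matrix.mulVecLin F) μ =
      LinearMap.ker (Matrix.mulVecLin ((F - μ • 1) ^ (finrank ℂ (Fin n ⊕ Fin n → ℂ)))) := by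
  have hL : ∀ M : Matrix (Fin n ⊕ Fin n) (Fin n ⊕ Fin n) ℂ,
      M.mulVecLin = Matrix.toLinAlgEquiv' M := by
    intro M; ext v; simp [Matrix.toLinAlgEquiv'_apply]
  rw [Module.End.maxGenEigenspace_eq_genEigenspace_finrank, Module.End.genEigenspace_nat]
  congr 1
  rw [hL, hL, map_pow, map_sub, _root_.map_smul, _root_.map_one]

lemma finrank_maxGenEigenspace_neg
    (hFskew : ∀ X Y : Fin n ⊕ Fin n → ℂ,
      sympForm n X (F *ᵥ Y) = - sympForm n (F *ᵥ X) Y)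
    (hn : 1 ≤ n) (μ : ℂ) :
    finrank ℂ (Module.End.maxGenEigenspace (Matrix.mulVecLin F) μ) =
      finrank ℂ (Module.End.maxGenEigenspace (Matrix.mulVecLin F) (-μ)) := by
  set d := finrank ℂ (Fin n ⊕ Fin n → ℂ) with hd
  have hd0 : d ≠ 0 := by
    rw [hd, finrank_pi]
    simp [Fintype.card_sum]
    omega
  have rk : ∀ M : Matrix (Fin n ⊕ Fin n) (Fin n ⊕ Fin n) ℂ,
      M.rank + finrank ℂ (LinearMap.ker M.mulVecLin) = d := by
    intro M
    have : M.rank = finrank ℂ (LinearMap.range M.mulVecLin) := rfl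
    rw [this, hd]
    exact LinearMap.finrank_range_add_finrank_ker _
  rw [maxGenEigenspace_eq_ker, maxGenEigenspace_eq_ker]
  have h1 := rk ((F - μ • 1) ^ d)
  have h2 := rk ((F - (-μ) • 1) ^ d)
  have h3 : (F - (-μ) • 1) = F + μ • 1 := by rw [neg_smul, sub_neg_eq_add]
  rw [h3] at h2
  rw [h3, ← hd]
  have h4 := rank_pow_neg_eq hFskew μ hd0
  omega

end Stmt1Aux3

namespace Stmt1Aux4
open Stmt1Aux Stmt1Aux2 Stmt1Aux3

lemma finrank_biSup {K V : Type*} [Field K] [AddCommGroup V] [Module K V]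
    [FiniteDimensional K V] {ι : Type*} [DecidableEq ι] {p : ι → Submodule K V}
    (hp : iSupIndep p) (s : Finset ι) :
    finrank K (⨆ i ∈ s, p i : Submodule K V) = ∑ i ∈ s, finrank K (p i) := by
  classical
  induction s using Finset.induction_on with
  | empty => simp
  | @insert a s ha ih =>
    rw [Finset.sum_insert ha, ← ih]
    have h1 : (⨆ i ∈ insert a s, p i) = p a ⊔ ⨆ i ∈ s, p i := by
      simp [Finset.mem_insert, iSup_or, iSup_sup_eq]
    have hdisj : Disjoint (p a) (⨆ i ∈ s, p i) := by
      have := hp.disjoint_biSup (x := a) (y := (↑s : Set ι)) (by simpa using ha)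
      simpa using this
    have h2 := Submodule.finrank_sup_add_finrank_inf_eq (p a) (⨆ i ∈ s, p i)
    rw [hdisj.eq_bot] at h2
    simp only [finrank_bot, add_zero] at h2
    rw [h1, h2]

variable {n : ℕ} {F : Matrix (Fin n ⊕ Fin n) (Fin n ⊕ Fin n) ℂ}

lemma G_bot_of_not_hasEigenvalue {μ : ℂ}
    (h : ¬ Module.End.HasEigenvalue (Matrix.mulVecLin F) μ) :
    Module.End.maxGenEigenspace (Matrix.mulVecLin F) μ = ⊥ := by
  by_contra hne
  apply h
  apply Module.End.hasEigenvalue_of_hasGenEigenvalue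
    (k := finrank ℂ (Fin n ⊕ Fin n → ℂ))
  rw [Module.End.hasGenEigenvalue_iff]
  rw [← Module.End.maxGenEigenspace_eq_genEigenspace_finrank]
  exact hne

theorem counting
    (hFskew : ∀ X Y : Fin n ⊕ Fin n → ℂ,
      sympForm n X (F *ᵥ Y) = - sympForm n (F *ᵥ X) Y)
    (hn : 1 ≤ n)
    (hreal : ∀ r : ℝ, ¬ Module.End.HasEigenvalue (Matrix.mulVecLin F) (r : ℂ)) :
    (Module.finrank ℂ
        ↥(⨆ (μ : ℂ) (_ : 0 < μ.im), Module.End.maxGenEigenspace (Matrix.mulVecLin F) μ) = n) ∧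
    (Module.finrank ℂ
        ↥(⨆ (μ : ℂ) (_ : μ.im < 0), Module.End.maxGenEigenspace (Matrix.mulVecLin F) μ) = n) := by
  classical
  set T := Matrix.mulVecLin F with hT
  set G := Module.End.maxGenEigenspace T with hG
  have hind : iSupIndep G := Module.End.independent_maxGenEigenspace T
  have hfin : {μ : ℂ | G μ ≠ ⊥}.Finite := WellFoundedGT.finite_ne_bot_of_iSupIndep hind
  set s : Finset ℂ := hfin.toFinset with hs
  have hmem : ∀ μ : ℂ, μ ∈ s ↔ G μ ≠ ⊥ := by intro μ; simp [hs]
  -- no eigenvalue on the real axis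
  have him : ∀ μ ∈ s, μ.im ≠ 0 := by
    intro μ hμ h0
    have hμr : μ = ((μ.re : ℝ) : ℂ) := by
      apply Complex.ext <;> simp [h0]
    exact (hmem μ).mp hμ (G_bot_of_not_hasEigenvalue (hμr ▸ hreal μ.re))
  -- symmetry of multiplicities
  have hmm : ∀ μ : ℂ, finrank ℂ (G μ) = finrank ℂ (G (-μ)) := by
    intro μ
    exact finrank_maxGenEigenspace_neg hFskew hn μ
  have hGbot : ∀ μ : ℂ, G μ = ⊥ ↔ finrank ℂ (G μ) = 0 := by
    intro μ
    rw [Submodule.finrank_eq_zero]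
  have hnegmem : ∀ μ : ℂ, μ ∈ s → -μ ∈ s := by
    intro μ hμ
    rw [hmem] at hμ ⊢
    simp only [Ne, hGbot] at hμ ⊢
    rw [← hmm]; exact hμ
  set splus := s.filter (fun μ => 0 < μ.im) with hsplus
  set sminus := s.filter (fun μ => ¬ 0 < μ.im) with hsminus
  -- identify the two suprema with finite suprema
  have hSplus : (⨆ (μ : ℂ) (_ : 0 < μ.im), G μ) = ⨆ μ ∈ splus, G μ := by
    apply le_antisymm
    · apply iSup₂_le
      intro μ hμ
      by_cases hb : G μ = ⊥
      · rw [hb]; exact bot_le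
      · exact le_iSup₂_of_le μ (by rw [hsplus, Finset.mem_filter]; exact ⟨(hmem μ).mpr hb, hμ⟩)
          le_rfl
    · apply iSup₂_le
      intro μ hμ
      rw [hsplus, Finset.mem_filter] at hμ
      exact le_iSup₂_of_le μ hμ.2 le_rfl
  have hSminus : (⨆ (μ : ℂ) (_ : μ.im < 0), G μ) = ⨆ μ ∈ sminus, G μ := by
    apply le_antisymm
    · apply iSup₂_le
      intro μ hμ
      by_cases hb : G μ = ⊥
      · rw [hb]; exact bot_le
      · exact le_iSup₂_of_le μ
          (by rw [hsminus, Finset.mem_filter];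
              exact ⟨(hmem μ).mpr hb, by intro h; exact absurd hμ (by linarith)⟩) le_rfl
    · apply iSup₂_le
      intro μ hμ
      rw [hsminus, Finset.mem_filter] at hμ
      have : μ.im < 0 := by
        rcases lt_trichotomy μ.im 0 with h | h | h
        · exact h
        · exact absurd h (him μ hμ.1)
        · exact absurd h hμ.2
      exact le_iSup₂_of_le μ this le_rfl
  -- total is everything
  have htop : (⨆ μ ∈ s, G μ) = ⊤ := by
    apply le_antisymm le_top
    rw [← Module.End.iSup_maxGenEigenspace_eq_top T]
    apply iSup_le
    intro μ
    by_cases hb : G μ = ⊥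
    · rw [← hG, hb]; exact bot_le
    · exact le_iSup₂_of_le μ ((hmem μ).mpr hb) le_rfl
  have hcard : finrank ℂ (⊤ : Submodule ℂ (Fin n ⊕ Fin n → ℂ)) = 2 * n := by
    rw [finrank_top, finrank_pi]
    simp [Fintype.card_sum]
    ring
  have hsum : ∑ μ ∈ s, finrank ℂ (G μ) = 2 * n := by
    rw [← finrank_biSup hind, htop, hcard]
  have hsplit : ∑ μ ∈ splus, finrank ℂ (G μ) + ∑ μ ∈ sminus, finrank ℂ (G μ) = 2 * n := by
    rw [hsplus, hsminus, Finset.sum_filter_add_sum_filter_not, hsum]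
  have heq : ∑ μ ∈ splus, finrank ℂ (G μ) = ∑ μ ∈ sminus, finrank ℂ (G μ) := by
    apply Finset.sum_nbij' (i := fun μ => -μ) (j := fun μ => -μ)
    · intro μ hμ
      rw [hsplus, Finset.mem_filter] at hμ
      rw [hsminus, Finset.mem_filter]
      refine ⟨hnegmem μ hμ.1, by simp; linarith [hμ.2]⟩
    · intro μ hμ
      rw [hsminus, Finset.mem_filter] at hμ
      rw [hsplus, Finset.mem_filter]
      have : μ.im < 0 := by
        rcases lt_trichotomy μ.im 0 with h | h | h
        · exact h
        · exact absurd h (him μ hμ.1)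
        · exact absurd h hμ.2
      refine ⟨hnegmem μ hμ.1, by simp; linarith⟩
    · intro μ _; simp
    · intro μ _; simp
    · intro μ _; exact hmm μ
  constructor
  · rw [hSplus, finrank_biSup hind]
    omega
  · rw [hSminus, finrank_biSup hind]
    omega

end Stmt1Aux4

namespace Stmt1Aux5
open Stmt1Aux Stmt1Aux2 Stmt1Aux3

variable {n : ℕ}

/-- Complexification of a real vector. -/
def cvec (x : Fin n ⊕ Fin n → ℝ) : Fin n ⊕ Fin n → ℂ := fun j => (x j : ℂ)

lemma cvec_add (x y : Fin n ⊕ Fin n → ℝ) : cvec (x + y) = cvec x + cvec y := by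
  ext j; simp [cvec]

lemma cvec_smul (t : ℝ) (x : Fin n ⊕ Fin n → ℝ) : cvec (t • x) = (t : ℂ) • cvec x := by
  ext j; simp [cvec]

lemma cvec_single (i : Fin n ⊕ Fin n) :
    cvec (Pi.single i (1 : ℝ)) = Pi.single i (1 : ℂ) := by
  classical
  ext k
  by_cases h : k = i
  · subst h; simp [cvec]
  · simp [cvec, Pi.single_apply, h]

lemma sympForm_antisymm (X Y : Fin n ⊕ Fin n → ℂ) :
    sympForm n X Y = - sympForm n Y X := by
  simp only [sympForm]
  ring

lemma dot_J_antisymm (X Y : Fin n ⊕ Fin n → ℂ) :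
    X ⬝ᵥ J n *ᵥ Y = -(Y ⬝ᵥ J n *ᵥ X) := by
  rw [← sympForm_eq, ← sympForm_eq, sympForm_antisymm]

lemma dot_J_self (X : Fin n ⊕ Fin n → ℂ) : X ⬝ᵥ J n *ᵥ X = 0 := by
  have := dot_J_antisymm X X
  linear_combination this / 2 -- a = -a

lemma dot_J_real_im (x y : Fin n ⊕ Fin n → ℝ) :
    (cvec x ⬝ᵥ J n *ᵥ cvec y).im = 0 := by
  rw [J_mulVec]
  simp only [dotProduct, Complex.im_sum]
  apply Finset.sum_eq_zero
  intro i _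
  cases i <;> simp [cvec]

lemma re_mulVec (F : Matrix (Fin n ⊕ Fin n) (Fin n ⊕ Fin n) ℂ)
    (x : Fin n ⊕ Fin n → ℝ) (i : Fin n ⊕ Fin n) :
    ((F *ᵥ cvec x) i).re = (F.map Complex.re *ᵥ x) i := by
  simp only [Matrix.mulVec, dotProduct, Complex.re_sum, Matrix.map_apply]
  apply Finset.sum_congr rfl
  intro j _
  simp [cvec, Complex.mul_re]

lemma im_mulVec (F : Matrix (Fin n ⊕ Fin n) (Fin n ⊕ Fin n) ℂ)
    (x : Fin n ⊕ Fin n → ℝ) (i : Fin n ⊕ Fin n) :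
    ((F *ᵥ cvec x) i).im = (F.map Complex.im *ᵥ x) i := by
  simp only [Matrix.mulVec, dotProduct, Complex.im_sum, Matrix.map_apply]
  apply Finset.sum_congr rfl
  intro j _
  simp [cvec, Complex.mul_im]

lemma quad_zero {c d : ℝ} (hd : 0 ≤ d) (h : ∀ t : ℝ, 0 ≤ 2 * t * c + t ^ 2 * d) :
    c = 0 := by
  by_contra hc
  have h1 := h (-c / (d + 1))
  have hd1 : (0:ℝ) < d + 1 := by linarith
  rw [div_pow, neg_pow] at h1
  field_simp at h1
  have hden : (0:ℝ) < (d + 1) * (d + 1) ^ 2 := by positivity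
  have h2 : 0 ≤ -(2 * c * c * (d + 1) ^ 2) + c ^ 2 * d * (d + 1) := by
    nlinarith [mul_nonneg hd1.le (show 0 ≤ c ^ 2 * (-(2 * (d + 1)) + d) by linarith [h1])]
  have hc2 : 0 < c * c := mul_self_pos.mpr hc
  nlinarith [mul_pos hc2 hd1, mul_pos (mul_pos hc2 hd1) hd1]

end Stmt1Aux5

namespace Stmt1Aux6
open Stmt1Aux Stmt1Aux2 Stmt1Aux3 Stmt1Aux5

variable {n : ℕ} {F : Matrix (Fin n ⊕ Fin n) (Fin n ⊕ Fin n) ℂ}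

theorem no_real_eig
    (hFskew : ∀ X Y : Fin n ⊕ Fin n → ℂ,
      sympForm n X (F *ᵥ Y) = - sympForm n (F *ᵥ X) Y)
    (hReq : ∀ X : Fin n ⊕ Fin n → ℝ,
      0 ≤ (sympForm n (fun j => (X j : ℂ)) (F *ᵥ fun j => (X j : ℂ))).re)
    (hSing : ∀ X : Fin n ⊕ Fin n → ℝ,
      (∀ k : ℕ, k ≤ 2 * n - 1 →
        (F.map Complex.re * (F.map Complex.im) ^ k) *ᵥ X = 0) → X = 0)
    (r : ℝ) : ¬ Module.End.HasEigenvalue (Matrix.mulVecLin F) (r : ℂ) := by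
  classical
  intro hev
  obtain ⟨Z, hZev⟩ := hev.exists_hasEigenvector
  have hZ0 : Z ≠ 0 := hZev.2
  have hFZ : F *ᵥ Z = (r : ℂ) • Z := by
    have := Module.End.mem_eigenspace_iff.mp hZev.1
    simpa [Matrix.mulVecLin_apply] using this
  set A := F.map Complex.re with hA
  set B := F.map Complex.im with hB
  set u : Fin n ⊕ Fin n → ℝ := fun j => (Z j).re with hu
  set v : Fin n ⊕ Fin n → ℝ := fun j => (Z j).im with hv
  have hZuv : Z = cvec u + Complex.I • cvec v := by
    ext j
    simp only [cvec, Pi.add_apply, Pi.smul_apply, smul_eq_mul, hu, hv]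
    rw [mul_comm]
    exact (Complex.re_add_im _).symm
  set W := J n * F with hW
  have hsymm : ∀ X Y : Fin n ⊕ Fin n → ℂ, X ⬝ᵥ W *ᵥ Y = Y ⬝ᵥ W *ᵥ X := by
    intro X Y
    have h := hFskew X Y
    rw [sympForm_antisymm (F *ᵥ X) Y, neg_neg, sympForm_eq, sympForm_eq] at h
    simpa [hW, Matrix.mulVec_mulVec] using h
  set g : (Fin n ⊕ Fin n → ℝ) → (Fin n ⊕ Fin n → ℝ) → ℝ :=
    fun x y => (cvec x ⬝ᵥ W *ᵥ cvec y).re with hg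
  have hg_nonneg : ∀ x, 0 ≤ g x x := by
    intro x
    have h := hReq x
    rw [sympForm_eq] at h
    rw [Matrix.mulVec_mulVec] at h; exact h
  have hg_symm : ∀ x y, g x y = g y x := fun x y => congrArg Complex.re (hsymm _ _)
  have hg_addl : ∀ x y z, g (x + y) z = g x z + g y z := by
    intro x y z
    simp [hg, cvec_add, add_dotProduct]
  have hg_smull : ∀ (t : ℝ) x z, g (t • x) z = t * g x z := by
    intro t x z
    simp [hg, cvec_smul, smul_dotProduct, smul_eq_mul, Complex.mul_re]
  have hg_addr : ∀ x y z, g z (x + y) = g z x + g z y := by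
    intro x y z; rw [hg_symm, hg_addl, hg_symm x z, hg_symm y z]
  have hg_smulr : ∀ (t : ℝ) x z, g z (t • x) = t * g z x := by
    intro t x z; rw [hg_symm, hg_smull, hg_symm x z]
  -- the sum of the two values is zero
  have hWZ : W *ᵥ Z = (r : ℂ) • (J n *ᵥ Z) := by
    rw [hW, ← Matrix.mulVec_mulVec, hFZ, Matrix.mulVec_smul]
  set Zb : Fin n ⊕ Fin n → ℂ := cvec u - Complex.I • cvec v with hZb
  have hE : Zb ⬝ᵥ W *ᵥ Z = (cvec u ⬝ᵥ W *ᵥ cvec u) + (cvec v ⬝ᵥ W *ᵥ cvec v) := by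
    rw [hZb]
    nth_rewrite 1 [hZuv]
    simp only [sub_dotProduct, smul_dotProduct, Matrix.mulVec_add, Matrix.mulVec_smul,
      dotProduct_add, dotProduct_smul, smul_eq_mul]
    linear_combination -(cvec v ⬝ᵥ W *ᵥ cvec v) * Complex.I_sq
      - Complex.I * (hsymm (cvec v) (cvec u))
  have hD : Zb ⬝ᵥ (J n *ᵥ Z) = 2 * Complex.I * (cvec u ⬝ᵥ J n *ᵥ cvec v) := by
    rw [hZb]
    nth_rewrite 1 [hZuv]
    simp only [sub_dotProduct, smul_dotProduct, Matrix.mulVec_add, Matrix.mulVec_smul,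
      dotProduct_add, dotProduct_smul, smul_eq_mul]
    linear_combination dot_J_self (cvec u)
      - Complex.I * (dot_J_antisymm (cvec v) (cvec u))
      - Complex.I * Complex.I * dot_J_self (cvec v)
  have hsum0 : g u u + g v v = 0 := by
    have h1 : (Zb ⬝ᵥ W *ᵥ Z).re = g u u + g v v := by
      rw [hE]; simp [hg]
    have h2 : (Zb ⬝ᵥ W *ᵥ Z).re = 0 := by
      rw [hWZ, dotProduct_smul, smul_eq_mul, hD]
      have ht := dot_J_real_im u v
      simp [Complex.mul_re, Complex.mul_im, ht]
    rw [← h1, h2]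
  have huu : g u u = 0 := le_antisymm (by linarith [hg_nonneg v]) (hg_nonneg u)
  have hvv : g v v = 0 := le_antisymm (by linarith [hg_nonneg u]) (hg_nonneg v)
  -- positive semidefinite + zero on diagonal gives zero row
  have hzero : ∀ x, g x x = 0 → ∀ y, g x y = 0 := by
    intro x hx y
    apply quad_zero (hg_nonneg y)
    intro t
    have h := hg_nonneg (x + t • y)
    have hexp : g (x + t • y) (x + t • y) = g x x + 2 * t * g x y + t ^ 2 * g y y := by
      simp only [hg_addl, hg_addr, hg_smull, hg_smulr]
      rw [hg_symm y x]
      ring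
    rw [hexp, hx] at h
    linarith
  have hgu := hzero u huu
  have hgv := hzero v hvv
  -- A kills u and v
  have hAx : ∀ x : Fin n ⊕ Fin n → ℝ, (∀ y, g x y = 0) → A *ᵥ x = 0 := by
    intro x hx
    funext i
    have key : ∀ i', g (Pi.single i' 1) x = ((W *ᵥ cvec x) i').re := by
      intro i'
      simp [hg, cvec_single, single_dotProduct]
    have hgx : ∀ i', g (Pi.single i' 1) x = 0 := by
      intro i'; rw [hg_symm]; exact hx _
    have hWx : ∀ i', (W *ᵥ cvec x) i' = (J n *ᵥ (F *ᵥ cvec x)) i' := by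
      intro i'; rw [hW, ← Matrix.mulVec_mulVec]
    cases i with
    | inl j =>
      have h := (key (Sum.inr j)).symm.trans (hgx (Sum.inr j))
      rw [hWx, J_mulVec] at h
      simp only [Sum.elim_inr] at h
      rw [re_mulVec] at h
      simpa using h
    | inr j =>
      have h := (key (Sum.inl j)).symm.trans (hgx (Sum.inl j))
      rw [hWx, J_mulVec] at h
      simp only [Sum.elim_inl, Complex.neg_re] at h
      rw [re_mulVec] at h
      simpa using neg_eq_zero.mp h
  have hAu : A *ᵥ u = 0 := hAx u hgu
  have hAv : A *ᵥ v = 0 := hAx v hgv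
  -- decomposition of F on real vectors
  have hdec : ∀ (x : Fin n ⊕ Fin n → ℝ) i, (F *ᵥ cvec x) i =
      (((A *ᵥ x) i : ℝ) : ℂ) + (((B *ᵥ x) i : ℝ) : ℂ) * Complex.I := by
    intro x i
    rw [hA, hB, ← re_mulVec, ← im_mulVec]
    exact (Complex.re_add_im _).symm
  have key : ∀ i, (F *ᵥ cvec u) i + Complex.I * (F *ᵥ cvec v) i
      = (r : ℂ) * (cvec u i + Complex.I * cvec v i) := by
    intro i
    have h := congrFun hFZ i
    rw [hZuv] at h
    simpa [Matrix.mulVec_add, Matrix.mulVec_smul, smul_eq_mul] using h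
  have hBu : B *ᵥ u = r • v := by
    funext i
    have h := key i
    rw [hdec u i, hdec v i, hAu, hAv] at h
    rw [Complex.ext_iff] at h
    obtain ⟨h1, h2⟩ := h
    simp only [cvec, Pi.zero_apply, Complex.ofReal_zero, zero_add, Complex.add_im,
      Complex.mul_im, Complex.I_re, Complex.I_im, Complex.ofReal_re, Complex.ofReal_im,
      Complex.mul_re, Complex.add_re] at h1 h2
    simp only [Pi.smul_apply, smul_eq_mul]
    linarith [h2]
  have hBv : B *ᵥ v = -(r • u) := by
    funext i
    have h := key i
    rw [hdec u i, hdec v i, hAu, hAv] at h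
    rw [Complex.ext_iff] at h
    obtain ⟨h1, h2⟩ := h
    simp only [cvec, Pi.zero_apply, Complex.ofReal_zero, zero_add, Complex.add_im,
      Complex.mul_im, Complex.I_re, Complex.I_im, Complex.ofReal_re, Complex.ofReal_im,
      Complex.mul_re, Complex.add_re] at h1 h2
    simp only [Pi.neg_apply, Pi.smul_apply, smul_eq_mul]
    linarith [h1]
  -- powers of B stay in the span of u and v
  have hspan : ∀ (x : Fin n ⊕ Fin n → ℝ), B *ᵥ x ∈ ({y | ∃ a b : ℝ, y = a • u + b • v}) →
      True := fun _ _ => trivial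
  have hspanu : ∀ k : ℕ, ∃ a b : ℝ, (B ^ k) *ᵥ u = a • u + b • v := by
    intro k
    induction k with
    | zero => exact ⟨1, 0, by simp⟩
    | succ k ih =>
      obtain ⟨a, b, hab⟩ := ih
      refine ⟨-(b * r), a * r, ?_⟩
      rw [pow_succ', ← Matrix.mulVec_mulVec, hab]
      rw [Matrix.mulVec_add, Matrix.mulVec_smul, Matrix.mulVec_smul, hBu, hBv]
      ext i
      simp only [Pi.add_apply, Pi.smul_apply, Pi.neg_apply, smul_eq_mul, Pi.mul_apply]
      ring
  have hspanv : ∀ k : ℕ, ∃ a b : ℝ, (B ^ k) *ᵥ v = a • u + b • v := by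
    intro k
    induction k with
    | zero => exact ⟨0, 1, by simp⟩
    | succ k ih =>
      obtain ⟨a, b, hab⟩ := ih
      refine ⟨-(b * r), a * r, ?_⟩
      rw [pow_succ', ← Matrix.mulVec_mulVec, hab]
      rw [Matrix.mulVec_add, Matrix.mulVec_smul, Matrix.mulVec_smul, hBu, hBv]
      ext i
      simp only [Pi.add_apply, Pi.smul_apply, Pi.neg_apply, smul_eq_mul, Pi.mul_apply]
      ring
  have hu0 : u = 0 := by
    apply hSing
    intro k _
    obtain ⟨a, b, hab⟩ := hspanu k
    rw [← Matrix.mulVec_mulVec, hab, Matrix.mulVec_add, Matrix.mulVec_smul,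
      Matrix.mulVec_smul, hAu, hAv]
    simp
  have hv0 : v = 0 := by
    apply hSing
    intro k _
    obtain ⟨a, b, hab⟩ := hspanv k
    rw [← Matrix.mulVec_mulVec, hab, Matrix.mulVec_add, Matrix.mulVec_smul,
      Matrix.mulVec_smul, hAu, hAv]
    simp
  apply hZ0
  rw [hZuv, hu0, hv0]
  ext j
  simp [cvec]

end Stmt1Aux6

/-- a Hamilton map of a partially elliptic quadratic form with trivial singular
space has no real eigenvalues, and has exactly `n` eigenvalues (with algebraic multiplicity)
in each of the upper and lower half-planes. -/
theorem stmt1 (n : ℕ) (hn : 1 ≤ n)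
    (F : Matrix (Fin n ⊕ Fin n) (Fin n ⊕ Fin n) ℂ)
    (hFskew : ∀ X Y : Fin n ⊕ Fin n → ℂ,
      sympForm n X (F *ᵥ Y) = - sympForm n (F *ᵥ X) Y)
    (hReq : ∀ X : Fin n ⊕ Fin n → ℝ,
      0 ≤ (sympForm n (fun j => (X j : ℂ)) (F *ᵥ fun j => (X j : ℂ))).re)
    (hSing : ∀ X : Fin n ⊕ Fin n → ℝ,
      (∀ k : ℕ, k ≤ 2 * n - 1 →
        (F.map Complex.re * (F.map Complex.im) ^ k) *ᵥ X = 0) → X = 0) :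
    (∀ r : ℝ, ¬ Module.End.HasEigenvalue (Matrix.mulVecLin F) (r : ℂ)) ∧
    (Module.finrank ℂ
        ↥(⨆ (μ : ℂ) (_ : 0 < μ.im), Module.End.maxGenEigenspace (Matrix.mulVecLin F) μ) = n) ∧
    (Module.finrank ℂ
        ↥(⨆ (μ : ℂ) (_ : μ.im < 0), Module.End.maxGenEigenspace (Matrix.mulVecLin F) μ) = n) := by
  have hreal := Stmt1Aux6.no_real_eig hFskew hReq hSing
  have hcount := Stmt1Aux4.counting hFskew hn hreal
  exact ⟨hreal, hcount.1, hcount.2⟩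
end

section
/- Let A ∈ ℂ^{n×n} be symmetric (Aᵗ = A) with positive definite imaginary part Im A = (A − A*)/(2i). Then the matrix 1 − iA is invertible, and setting C = (1 − iA)⁻¹(1 + iA) one has the identity 1 − C*C = (1 + iA*)⁻¹ (4 Im A) (1 − iA)⁻¹. Moreover, for any symmetric A with 1 − iA invertible and C = (1 − iA)⁻¹(1 + iA), the Hermitian matrix Im A is positive definite if and only if the Hermitian matrix 1 − C*C is positive definite. -/
open Matrix Complex
open scoped ComplexOrder

/-- The "imaginary part" `(A − A*)/(2i)` of a complex square matrix. -/
noncomputable def matImagPart {n : ℕ} (A : Matrix (Fin n) (Fin n) ℂ) :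
    Matrix (Fin n) (Fin n) ℂ :=
  ((2 * Complex.I)⁻¹ : ℂ) • (A - Aᴴ)

private lemma commute_one_sub_one_add {R : Type*} [Ring R] (c : R) :
    (1 - c) * (1 + c) = (1 + c) * (1 - c) := by noncomm_ring

private lemma posDef_four_smul_iff {n : ℕ} {M : Matrix (Fin n) (Fin n) ℂ} :
    ((4:ℂ) • M).PosDef ↔ M.PosDef := by
  have h4 : (0:ℂ) < 4 := by simp [Complex.lt_def]
  constructor
  · intro hM0
    obtain ⟨hh, hp⟩ := posDef_iff_dotProduct_mulVec.mp hM0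
    refine posDef_iff_dotProduct_mulVec.mpr ⟨?_, fun x hx => ?_⟩
    · have h : ((4:ℂ) • M)ᴴ = (4:ℂ) • M := hh
      rw [conjTranspose_smul] at h
      have h4' : (star (4:ℂ)) = 4 := by simp
      rw [h4'] at h
      exact smul_right_injective _ (by norm_num : (4:ℂ) ≠ 0) h
    · have h := hp hx
      rw [smul_mulVec, dotProduct_smul, smul_eq_mul] at h
      have h4i : (0:ℂ) < 4⁻¹ := by
        rw [show ((4:ℂ)⁻¹) = ((4⁻¹ : ℝ) : ℂ) by push_cast; ring]
        simp [Complex.lt_def]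
      have h' := mul_pos h4i h
      rwa [← mul_assoc, inv_mul_cancel₀ (by norm_num : (4:ℂ) ≠ 0), one_mul] at h'
  · intro hM0
    obtain ⟨hh, hp⟩ := posDef_iff_dotProduct_mulVec.mp hM0
    refine posDef_iff_dotProduct_mulVec.mpr ⟨?_, fun x hx => ?_⟩
    · show ((4:ℂ) • M)ᴴ = (4:ℂ) • M
      rw [conjTranspose_smul]
      have h4' : (star (4:ℂ)) = 4 := by simp
      rw [h4', hh]
    · rw [smul_mulVec, dotProduct_smul, smul_eq_mul]
      exact mul_pos h4 (hp hx)

private lemma posDef_conj_mul {n : ℕ} {M B : Matrix (Fin n) (Fin n) ℂ}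
    (hM : M.PosDef) (hB : IsUnit B) : (Bᴴ * M * B).PosDef := by
  refine posDef_iff_dotProduct_mulVec.mpr ⟨Matrix.isHermitian_conjTranspose_mul_mul B hM.1, fun x hx => ?_⟩
  have hinj : Function.Injective B.mulVec := Matrix.mulVec_injective_iff_isUnit.2 hB
  have hx' : B *ᵥ x ≠ 0 := by
    intro h
    exact hx (hinj (by simpa using h))
  have key := hM.dotProduct_mulVec_pos hx'
  rwa [star_mulVec, dotProduct_mulVec, vecMul_vecMul, ← dotProduct_mulVec,
    mulVec_mulVec] at key

private lemma isUnit_one_sub_I_smul {n : ℕ} {A : Matrix (Fin n) (Fin n) ℂ}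
    (hA : (matImagPart A).PosDef) : IsUnit (1 - Complex.I • A) := by
  rw [← Matrix.mulVec_injective_iff_isUnit]
  intro x y hxy
  by_contra hne
  set z := x - y with hz
  have hz0 : z ≠ 0 := sub_ne_zero.2 hne
  have hzeq : (1 - Complex.I • A) *ᵥ z = 0 := by
    rw [hz, mulVec_sub, hxy, sub_self]
  rw [sub_mulVec, one_mulVec, smul_mulVec, sub_eq_zero] at hzeq
  have hAz : A *ᵥ z = -Complex.I • z := by
    have h := congrArg (fun v => (-Complex.I : ℂ) • v) hzeq
    simp only [smul_smul, neg_mul, Complex.I_mul_I, neg_neg, one_smul] at h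
    exact h.symm
  have hA' : star z ⬝ᵥ (A *ᵥ z) = -Complex.I * (star z ⬝ᵥ z) := by
    rw [hAz, dotProduct_smul, smul_eq_mul]
  have hconj : star z ⬝ᵥ (Aᴴ *ᵥ z) = Complex.I * (star z ⬝ᵥ z) := by
    rw [dotProduct_mulVec, ← star_mulVec, hAz]
    simp [smul_dotProduct, smul_eq_mul]
  have hform : star z ⬝ᵥ (matImagPart A *ᵥ z) = -(star z ⬝ᵥ z) := by
    rw [matImagPart, smul_mulVec, dotProduct_smul, sub_mulVec, dotProduct_sub,
      hA', hconj, smul_eq_mul]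
    have hI : (2 * Complex.I) ≠ 0 := by simp [Complex.I_ne_zero]
    field_simp
    ring
  have h1 := hA.dotProduct_mulVec_pos hz0
  rw [hform] at h1
  have hs : (0:ℂ) < star z ⬝ᵥ z := dotProduct_star_self_pos_iff.mpr hz0
  have h2 := add_pos h1 hs
  rw [neg_add_cancel] at h2
  exact lt_irrefl 0 h2

private lemma sandwich {n : ℕ} (B P Q R : Matrix (Fin n) (Fin n) ℂ)
    [Invertible B] [Invertible R]
    (hBP : B * P = P * B) (hRQ : R * Q = Q * R) :
    R * (1 - (Q * R⁻¹) * (B⁻¹ * P)) * B = R * B - Q * P := by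
  have hQR' : R * (Q * R⁻¹) = Q := by
    rw [← Matrix.mul_assoc, hRQ, Matrix.mul_inv_cancel_right_of_invertible]
  have hPB' : B⁻¹ * P * B = P := by
    rw [Matrix.mul_assoc, ← hBP, Matrix.inv_mul_cancel_left_of_invertible]
  have h1 : R * ((Q * R⁻¹) * (B⁻¹ * P)) * B = Q * P := by
    rw [← Matrix.mul_assoc R (Q * R⁻¹) (B⁻¹ * P), hQR', Matrix.mul_assoc Q (B⁻¹ * P) B,
      Matrix.mul_assoc B⁻¹ P B, ← Matrix.mul_assoc B⁻¹ P B, hPB']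
  rw [mul_sub, mul_one, sub_mul, h1]

private lemma conj_intro {n : ℕ} (M B R : Matrix (Fin n) (Fin n) ℂ)
    [Invertible B] [Invertible R] :
    R⁻¹ * (R * M * B) * B⁻¹ = M := by
  rw [Matrix.mul_assoc R M B, Matrix.inv_mul_cancel_left_of_invertible,
    Matrix.mul_inv_cancel_right_of_invertible]

private lemma conj_cancel {n : ℕ} (M B : Matrix (Fin n) (Fin n) ℂ)
    [Invertible B] [Invertible Bᴴ] :
    Bᴴ * ((Bᴴ)⁻¹ * M * B⁻¹) * B = M := by
  rw [Matrix.mul_assoc ((Bᴴ)⁻¹) M (B⁻¹), Matrix.mul_inv_cancel_left_of_invertible,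
    Matrix.inv_mul_cancel_right_of_invertible]

private lemma expand_eq {n : ℕ} (A : Matrix (Fin n) (Fin n) ℂ) :
    (1 + Complex.I • Aᴴ) * (1 - Complex.I • A) - (1 - Complex.I • Aᴴ) * (1 + Complex.I • A)
      = (4 : ℂ) • matImagPart A := by
  have hI : (2 * Complex.I) ≠ 0 := by simp [Complex.I_ne_zero]
  have hc : (4:ℂ) * (2 * Complex.I)⁻¹ = -(2 * Complex.I) := by
    field_simp
    linear_combination (4:ℂ) * Complex.I_sq
  rw [matImagPart, smul_smul, hc]
  simp only [mul_sub, sub_mul, mul_add, add_mul, one_mul, mul_one, Matrix.smul_mul,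
    Matrix.mul_smul, smul_smul, smul_sub]
  module

private lemma key_identity {n : ℕ} (A : Matrix (Fin n) (Fin n) ℂ)
    (hB : IsUnit (1 - Complex.I • A)) :
    1 - ((1 - Complex.I • A)⁻¹ * (1 + Complex.I • A))ᴴ *
          ((1 - Complex.I • A)⁻¹ * (1 + Complex.I • A)) =
      (1 + Complex.I • Aᴴ)⁻¹ * ((4 : ℂ) • matImagPart A) * (1 - Complex.I • A)⁻¹ := by
  have hBH : (1 - Complex.I • A)ᴴ = 1 + Complex.I • Aᴴ := by
    rw [conjTranspose_sub, conjTranspose_one, conjTranspose_smul]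
    simp [Complex.star_def, Complex.conj_I, sub_eq_add_neg]
  have hPH : (1 + Complex.I • A)ᴴ = 1 - Complex.I • Aᴴ := by
    rw [conjTranspose_add, conjTranspose_one, conjTranspose_smul]
    simp [Complex.star_def, Complex.conj_I, sub_eq_add_neg]
  have hR : IsUnit (1 + Complex.I • Aᴴ) := by
    rw [← hBH]; exact (Matrix.isUnit_conjTranspose _).2 hB
  haveI := hB.invertible
  haveI := hR.invertible
  have hCH : ((1 - Complex.I • A)⁻¹ * (1 + Complex.I • A))ᴴ
      = (1 - Complex.I • Aᴴ) * (1 + Complex.I • Aᴴ)⁻¹ := by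
    rw [conjTranspose_mul, Matrix.conjTranspose_nonsing_inv, hBH, hPH]
  have hcomm1 : (1 - Complex.I • A) * (1 + Complex.I • A)
      = (1 + Complex.I • A) * (1 - Complex.I • A) := commute_one_sub_one_add _
  have hcomm2 : (1 + Complex.I • Aᴴ) * (1 - Complex.I • Aᴴ)
      = (1 - Complex.I • Aᴴ) * (1 + Complex.I • Aᴴ) :=
    (commute_one_sub_one_add (Complex.I • Aᴴ)).symm
  have main : (1 + Complex.I • Aᴴ) *
      (1 - ((1 - Complex.I • Aᴴ) * (1 + Complex.I • Aᴴ)⁻¹) *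
        ((1 - Complex.I • A)⁻¹ * (1 + Complex.I • A))) * (1 - Complex.I • A)
      = (4 : ℂ) • matImagPart A := by
    rw [sandwich _ _ _ _ hcomm1 hcomm2, expand_eq]
  rw [hCH, ← main, conj_intro]

/-- for symmetric `A` with positive definite imaginary part, `1 − iA` is
invertible and, with `C = (1 − iA)⁻¹(1 + iA)`, one has
`1 − C*C = (1 + iA*)⁻¹ (4 Im A) (1 − iA)⁻¹`; moreover for any symmetric `A` with `1 − iA`
invertible, `Im A` is positive definite iff `1 − C*C` is positive definite. -/
theorem stmt2 (n : ℕ) :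
    (∀ A : Matrix (Fin n) (Fin n) ℂ, Aᵀ = A → (matImagPart A).PosDef →
      IsUnit (1 - Complex.I • A) ∧
        (1 - ((1 - Complex.I • A)⁻¹ * (1 + Complex.I • A))ᴴ *
              ((1 - Complex.I • A)⁻¹ * (1 + Complex.I • A)) =
          (1 + Complex.I • Aᴴ)⁻¹ * ((4 : ℂ) • matImagPart A) * (1 - Complex.I • A)⁻¹)) ∧
    (∀ A : Matrix (Fin n) (Fin n) ℂ, Aᵀ = A → IsUnit (1 - Complex.I • A) →
      ((matImagPart A).PosDef ↔
        (1 - ((1 - Complex.I • A)⁻¹ * (1 + Complex.I • A))ᴴ *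
              ((1 - Complex.I • A)⁻¹ * (1 + Complex.I • A))).PosDef)) := by
  constructor
  · intro A _ hpos
    exact ⟨isUnit_one_sub_I_smul hpos, key_identity A (isUnit_one_sub_I_smul hpos)⟩
  · intro A _ hB
    have hBH : (1 - Complex.I • A)ᴴ = 1 + Complex.I • Aᴴ := by
      rw [conjTranspose_sub, conjTranspose_one, conjTranspose_smul]
      simp [Complex.star_def, Complex.conj_I, sub_eq_add_neg]
    have hR : IsUnit (1 + Complex.I • Aᴴ) := by
      rw [← hBH]; exact (Matrix.isUnit_conjTranspose _).2 hB
    haveI := hB.invertible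
    haveI := hR.invertible
    haveI : Invertible (1 - Complex.I • A)ᴴ :=
      ((Matrix.isUnit_conjTranspose _).2 hB).invertible
    have hrw : (1 + Complex.I • Aᴴ)⁻¹ = ((1 - Complex.I • A)⁻¹)ᴴ := by
      rw [← hBH, Matrix.conjTranspose_nonsing_inv]
    rw [key_identity A hB]
    constructor
    · intro hpos
      have hM4 : ((4:ℂ) • matImagPart A).PosDef := posDef_four_smul_iff.2 hpos
      have hBinv : IsUnit (1 - Complex.I • A)⁻¹ := Matrix.isUnit_nonsing_inv_iff.2 hB
      have h := posDef_conj_mul hM4 hBinv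
      rwa [Matrix.conjTranspose_nonsing_inv, hBH] at h
    · intro hpos
      rw [hrw] at hpos
      have h2 := posDef_conj_mul hpos hB
      rw [Matrix.conjTranspose_nonsing_inv, conj_cancel] at h2
      exact posDef_four_smul_iff.1 h2
end

section
/- Let C ∈ ℂ^{n×n} be symmetric (Cᵗ = C) and define Φ₁ : ℂⁿ → ℝ by Φ₁(x) = (1/4)(‖x‖² − Re(x · Cx)), where ‖x‖² = Σ_j |x_j|² and x · Cx = Σ_j x_j (Cx)_j is the bilinear dot product. Then Φ₁(x) > 0 for all x ∈ ℂⁿ \ {0} if and only if the Hermitian matrix 1 − C*C is positive definite (equivalently, all singular values of C lie in [0,1)). -/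
open Matrix Complex
open scoped ComplexOrder

/-- The weight `Φ₁(x) = (1/4)(‖x‖² − Re(x · Cx))` on `ℂⁿ`, with the bilinear dot product. -/
noncomputable def PhiOne (n : ℕ) (C : Matrix (Fin n) (Fin n) ℂ) (x : Fin n → ℂ) : ℝ :=
  (1 / 4) * ((∑ j, ‖x j‖ ^ 2) - (x ⬝ᵥ (C *ᵥ x)).re)

namespace Stmt3Aux

variable {n : ℕ}

/-- squared Euclidean norm -/
noncomputable def Q (v : Fin n → ℂ) : ℝ := ∑ j, ‖v j‖ ^ 2

lemma Q_nonneg (v : Fin n → ℂ) : 0 ≤ Q v := Finset.sum_nonneg fun _ _ => sq_nonneg _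

lemma Q_zero : Q (0 : Fin n → ℂ) = 0 := by simp [Q]

lemma Q_pos {v : Fin n → ℂ} (hv : v ≠ 0) : 0 < Q v := by
  obtain ⟨j, hj⟩ := Function.ne_iff.mp hv
  exact Finset.sum_pos' (fun _ _ => sq_nonneg _)
    ⟨j, Finset.mem_univ j, pow_pos (norm_pos_iff.mpr hj) 2⟩

lemma star_dot_self (v : Fin n → ℂ) : star v ⬝ᵥ v = (Q v : ℂ) := by
  simp only [dotProduct, Pi.star_apply, Q, Complex.ofReal_sum]
  refine Finset.sum_congr rfl fun j _ => ?_
  calc star (v j) * v j = v j * (starRingEnd ℂ) (v j) := by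
        rw [RCLike.star_def, mul_comm]
    _ = (Complex.normSq (v j) : ℂ) := Complex.mul_conj _
    _ = ((‖v j‖ ^ 2 : ℝ) : ℂ) := by
        rw [Complex.normSq_eq_norm_sq]
  
lemma Q_star (v : Fin n → ℂ) : Q (star v) = Q v := by
  simp [Q, RCLike.star_def]

lemma Q_par (y z : Fin n → ℂ) : Q (y + z) + Q (y - z) = 2 * Q y + 2 * Q z := by
  simp only [Q, ← Finset.sum_add_distrib, Finset.mul_sum]
  refine Finset.sum_congr rfl fun j _ => ?_
  have h := parallelogram_law_with_norm ℂ (y j) (z j)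
  simp only [Pi.add_apply, Pi.sub_apply, pow_two]
  linarith

lemma Q_smul (c : ℂ) (v : Fin n → ℂ) : Q (c • v) = ‖c‖ ^ 2 * Q v := by
  simp only [Q, Pi.smul_apply, smul_eq_mul, norm_mul, mul_pow, Finset.mul_sum]

end Stmt3Aux

open Stmt3Aux

/-- for symmetric `C`, strict positivity of `Φ₁` off the origin is equivalent
to positive definiteness of `1 − C*C`. -/
theorem stmt3 (n : ℕ) (C : Matrix (Fin n) (Fin n) ℂ) (hC : Cᵀ = C) :
    (∀ x : Fin n → ℂ, x ≠ 0 → 0 < PhiOne n C x) ↔ (1 - Cᴴ * C).PosDef := by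
  have htri : ∀ a b : ℂ, ‖a - b‖ ≤ ‖a‖ + ‖b‖ := fun a b => by
    simpa using norm_sub_le a b
  have hsym : ∀ y z : Fin n → ℂ, y ⬝ᵥ (C *ᵥ z) = z ⬝ᵥ (C *ᵥ y) := by
    intro y z
    rw [dotProduct_mulVec, ← hC, vecMul_transpose, hC, dotProduct_comm]
  have pol : ∀ y z : Fin n → ℂ,
      (y + z) ⬝ᵥ (C *ᵥ (y + z)) - (y - z) ⬝ᵥ (C *ᵥ (y - z)) = 4 * (y ⬝ᵥ (C *ᵥ z)) := by
    intro y z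
    simp only [mulVec_add, mulVec_sub, dotProduct_add, dotProduct_sub,
      add_dotProduct, sub_dotProduct, hsym z y]
    ring
  have keyQ : ∀ x : Fin n → ℂ,
      star x ⬝ᵥ ((1 - Cᴴ * C) *ᵥ x) = ((Q x - Q (C *ᵥ x) : ℝ) : ℂ) := by
    intro x
    rw [sub_mulVec, one_mulVec, dotProduct_sub, star_dot_self, ← mulVec_mulVec,
      dotProduct_mulVec, ← star_mulVec, star_dot_self, Complex.ofReal_sub]
  constructor
  · intro hΦ
    have hlt : ∀ w : Fin n → ℂ, w ≠ 0 → (w ⬝ᵥ (C *ᵥ w)).re < Q w := by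
      intro w hw
      have h := hΦ w hw
      have hq : PhiOne n C w = (1 / 4) * (Q w - (w ⬝ᵥ (C *ᵥ w)).re) := rfl
      rw [hq] at h; linarith
    -- strict bound on the modulus of the quadratic form
    have habs : ∀ w : Fin n → ℂ, w ≠ 0 → ‖w ⬝ᵥ (C *ᵥ w)‖ < Q w := by
      intro w hw
      set d := w ⬝ᵥ (C *ᵥ w) with hd_def
      by_cases hd : d = 0
      · simpa [hd] using Q_pos hw
      · have habsd : (0:ℝ) < ‖d‖ := norm_pos_iff.mpr hd
        obtain ⟨c, hc⟩ := IsAlgClosed.exists_pow_nat_eq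
          ((starRingEnd ℂ) d / ((‖d‖ : ℝ) : ℂ)) (n := 2) (by norm_num)
        have hcabs : ‖c‖ = 1 := by
          have h2 : ‖c‖ ^ 2 = 1 := by
            rw [← norm_pow, hc, norm_div, Complex.norm_conj, Complex.norm_real, Real.norm_eq_abs,
              abs_of_pos habsd, div_self (ne_of_gt habsd)]
          nlinarith [norm_nonneg c]
        have hc0 : c ≠ 0 := by
          intro h; rw [h] at hcabs; simp at hcabs
        have hw' : c • w ≠ 0 := smul_ne_zero hc0 hw
        have h1 : (c • w) ⬝ᵥ (C *ᵥ (c • w)) = c ^ 2 * d := by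
          rw [mulVec_smul, dotProduct_smul, smul_dotProduct]
          simp only [smul_eq_mul, ← hd_def]; ring
        have h2 : c ^ 2 * d = ((‖d‖ : ℝ) : ℂ) := by
          rw [hc, div_mul_eq_mul_div, mul_comm, Complex.mul_conj, Complex.normSq_eq_norm_sq]
          rw [Complex.ofReal_pow]
          rw [sq]
          field_simp
        have h3 := hlt (c • w) hw'
        rw [h1, h2] at h3
        rw [Q_smul, hcabs] at h3
        simpa using h3
    have hstep : ∀ x : Fin n → ℂ, x ≠ 0 → Q (C *ᵥ x) < Q x := by
      intro x hx
      set u := C *ᵥ x with hu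
      set y := star u with hy
      have hky : y ⬝ᵥ (C *ᵥ x) = ((Q u : ℝ) : ℂ) := by rw [hy, ← hu, star_dot_self]
      have hsum : ‖(y + x) ⬝ᵥ (C *ᵥ (y + x))‖
          + ‖(y - x) ⬝ᵥ (C *ᵥ (y - x))‖ < Q (y + x) + Q (y - x) := by
        by_cases h1 : y + x = 0
        · have h2 : y - x ≠ 0 := by
            intro h2
            apply hx
            funext j
            have a1 : y j + x j = 0 := congrFun h1 j
            have a2 : y j - x j = 0 := congrFun h2 j
            show x j = 0
            linear_combination (a1 - a2) / 2
          have hb := habs _ h2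
          rw [h1]
          simpa [Q_zero] using hb
        · by_cases h2 : y - x = 0
          · have hb := habs _ h1
            rw [h2]
            simpa [Q_zero] using hb
          · exact add_lt_add (habs _ h1) (habs _ h2)
      have e1 : (4 : ℝ) * Q u = ‖4 * ((Q u : ℝ) : ℂ)‖ := by
        rw [norm_mul]
        simp only [Complex.norm_real, Real.norm_eq_abs]
        rw [_root_.abs_of_nonneg (Q_nonneg u)]
        norm_num
      have h4 : 4 * Q u ≤ ‖(y + x) ⬝ᵥ (C *ᵥ (y + x))‖
          + ‖(y - x) ⬝ᵥ (C *ᵥ (y - x))‖ := by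
        rw [e1, ← hky, ← pol y x]
        exact htri _ _
      have hpar := Q_par y x
      have hQy : Q y = Q u := Q_star u
      linarith
    refine Matrix.PosDef.of_dotProduct_mulVec_pos ?_ ?_
    · exact Matrix.IsHermitian.sub Matrix.isHermitian_one
        (Matrix.posSemidef_conjTranspose_mul_self C).1
    · intro x hx
      rw [keyQ x]
      exact Complex.zero_lt_real.mpr (by linarith [hstep x hx])
  · intro hpd x hx
    have h0 := hpd.dotProduct_mulVec_pos hx
    rw [keyQ x] at h0
    have h1 : Q (C *ᵥ x) < Q x := by
      have := Complex.zero_lt_real.mp h0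
      linarith
    set u := C *ᵥ x with hu
    have hQx := Q_pos hx
    have t1 : ‖x ⬝ᵥ u‖ ≤ ∑ j, ‖x j‖ * ‖u j‖ := by
      calc ‖∑ j, x j * u j‖ ≤ ∑ j, ‖x j * u j‖ :=
            norm_sum_le _ _
        _ = ∑ j, ‖x j‖ * ‖u j‖ := by
            simp [norm_mul]
    have t2 : (∑ j, ‖x j‖ * ‖u j‖) ^ 2 ≤ Q x * Q u :=
      Finset.sum_mul_sq_le_sq_mul_sq _ _ _
    have hcs : ‖x ⬝ᵥ u‖ < Q x := by
      nlinarith [norm_nonneg (x ⬝ᵥ u), Q_nonneg u,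
        Finset.sum_nonneg (fun j (_ : j ∈ Finset.univ) =>
          mul_nonneg (norm_nonneg (x j))
            (norm_nonneg (u j)))]
    have hre : (x ⬝ᵥ u).re < Q x := lt_of_le_of_lt (Complex.re_le_norm _) hcs
    have hq : PhiOne n C x = (1 / 4) * (Q x - (x ⬝ᵥ (C *ᵥ x)).re) := rfl
    rw [hq, ← hu]
    linarith
end

section
/- Let N ≥ 1 and let A ∈ ℂ^{N×N} be upper triangular (A_{jk} = 0 whenever j > k) and Jordan-like in the sense that A_{jk} ≠ 0 implies A_{jj} = A_{kk}. Let z ∈ ℂ and ε > 0 be such that |A_{jj} − z| > ε for every j with A_{jj} ≠ z. Then (2πi)⁻¹ ∮_{|λ−z|=ε} (λ·1 − A)⁻¹ dλ = D, where D is the diagonal matrix with D_{jj} = 1 if A_{jj} = z and D_{jj} = 0 otherwise, and the contour integral is the counterclockwise circle integral of the matrix-valued resolvent (which is defined for every λ on the circle since the eigenvalues of an upper triangular matrix are its diagonal entries). -/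
open Matrix Complex

lemma circleIntegral_finset_sum {ι : Type*} (s : Finset ι) (f : ι → ℂ → ℂ) (c : ℂ) (R : ℝ)
    (h : ∀ i ∈ s, CircleIntegrable (f i) c R) :
    (∮ w in C(c, R), ∑ i ∈ s, f i w) = ∑ i ∈ s, ∮ w in C(c, R), f i w := by
  simp only [circleIntegral, Finset.smul_sum]
  exact intervalIntegral.integral_finset_sum fun i hi => (h i hi).out


/-- the Riesz projection of an upper-triangular "Jordan-like" matrix `A`
for the eigenvalue `z` is the diagonal 0-1 matrix picking out the indices `j` with
`A j j = z`. The contour integral of the matrix resolvent is taken entrywise. -/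
theorem stmt6 (N : ℕ) (hN : 1 ≤ N) (A : Matrix (Fin N) (Fin N) ℂ)
    (hupper : ∀ j k : Fin N, k < j → A j k = 0)
    (hjordan : ∀ j k : Fin N, A j k ≠ 0 → A j j = A k k)
    (z : ℂ) (ε : ℝ) (hε : 0 < ε)
    (hfar : ∀ j : Fin N, A j j ≠ z → ε < ‖A j j - z‖) :
    ∀ i j : Fin N,
      (2 * Real.pi * Complex.I : ℂ)⁻¹ *
          circleIntegral
            (fun lam => ((lam • (1 : Matrix (Fin N) (Fin N) ℂ) - A)⁻¹) i j) z ε =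
        if i = j ∧ A i i = z then 1 else 0 := by
  intro i j
  set d : Fin N → ℂ := fun k => A k k with hd
  set Np : Matrix (Fin N) (Fin N) ℂ := A - Matrix.diagonal d with hNpdef
  have hNp_entry : ∀ p q : Fin N, ¬ p < q → Np p q = 0 := by
    intro p q h
    rcases eq_or_ne p q with rfl | hne
    · simp [hNpdef, Matrix.sub_apply, hd]
    · have hqp : q < p := lt_of_le_of_ne (not_lt.mp h) (Ne.symm hne)
      simp [hNpdef, Matrix.sub_apply, Matrix.diagonal_apply_ne _ hne, hupper p q hqp]
  have hNp_diag : ∀ p q : Fin N, Np p q ≠ 0 → d p = d q := by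
    intro p q h
    rcases eq_or_ne p q with rfl | hne
    · rfl
    · have : A p q ≠ 0 := by
        simpa [hNpdef, Matrix.sub_apply, Matrix.diagonal_apply_ne _ hne] using h
      exact hjordan p q this
  have hpow_bound : ∀ m : ℕ, ∀ p q : Fin N, (q : ℕ) < (p : ℕ) + m → (Np ^ m) p q = 0 := by
    intro m
    induction m with
    | zero =>
      intro p q h
      have : p ≠ q := by
        intro e; subst e; simp at h
      simp [Matrix.one_apply_ne this]
    | succ m ih =>
      intro p q h
      rw [pow_succ, Matrix.mul_apply]
      refine Finset.sum_eq_zero fun r _ => ?_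
      by_cases hr : (r : ℕ) < (p : ℕ) + m
      · rw [ih p r hr, zero_mul]
      · have : ¬ r < q := by
          intro hlt
          have : (r : ℕ) < (q : ℕ) := hlt
          omega
        rw [hNp_entry r q this, mul_zero]
  have hNpN : Np ^ N = 0 := by
    ext p q
    rw [hpow_bound N p q (by have := q.isLt; omega)]
    simp
  have hpow_diag : ∀ m : ℕ, ∀ p q : Fin N, (Np ^ m) p q ≠ 0 → d p = d q := by
    intro m
    induction m with
    | zero =>
      intro p q h
      have : p = q := by
        by_contra hne
        exact h (by simp [Matrix.one_apply_ne hne])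
      rw [this]
    | succ m ih =>
      intro p q h
      rw [pow_succ, Matrix.mul_apply] at h
      obtain ⟨r, -, hr⟩ := Finset.exists_ne_zero_of_sum_ne_zero h
      have h1 : (Np ^ m) p r ≠ 0 := fun e => hr (by rw [e, zero_mul])
      have h2 : Np r q ≠ 0 := fun e => hr (by rw [e, mul_zero])
      exact (ih p r h1).trans (hNp_diag r q h2)
  set E : ℂ → Matrix (Fin N) (Fin N) ℂ := fun lam => Matrix.diagonal (fun k => (lam - d k)⁻¹) with hE
  have hcomm : ∀ lam : ℂ, Commute (E lam) Np := by
    intro lam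
    show E lam * Np = Np * E lam
    ext p q
    rw [hE, Matrix.diagonal_mul, Matrix.mul_diagonal]
    by_cases h : Np p q = 0
    · rw [h, mul_zero, zero_mul]
    · rw [hNp_diag p q h, mul_comm]
  have hinv : ∀ lam : ℂ, (∀ k, lam ≠ d k) →
      (lam • (1 : Matrix (Fin N) (Fin N) ℂ) - A)⁻¹ =
        ∑ m ∈ Finset.range N, (E lam) ^ (m + 1) * Np ^ m := by
    intro lam hlam
    apply Matrix.inv_eq_right_inv
    have hsub : ∀ k, lam - d k ≠ 0 := fun k => sub_ne_zero.mpr (hlam k)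
    have key : lam • (1 : Matrix (Fin N) (Fin N) ℂ) - A
        = Matrix.diagonal (fun k => lam - d k) - Np := by
      ext p q
      rcases eq_or_ne p q with rfl | hne
      · simp [hNpdef, Matrix.sub_apply, Matrix.one_apply_eq, Matrix.diagonal_apply_eq]
      · simp [hNpdef, Matrix.sub_apply, Matrix.one_apply_ne hne, Matrix.diagonal_apply_ne _ hne]
    have hED : Matrix.diagonal (fun k => lam - d k) * E lam = 1 := by
      rw [hE, Matrix.diagonal_mul_diagonal]
      have : (fun k => (lam - d k) * (lam - d k)⁻¹) = fun _ => (1 : ℂ) := by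
        funext k; exact mul_inv_cancel₀ (hsub k)
      rw [this, Matrix.diagonal_one]
    rw [key, Finset.mul_sum]
    have step : ∀ m : ℕ,
        (Matrix.diagonal (fun k => lam - d k) - Np) * ((E lam) ^ (m + 1) * Np ^ m)
          = (E lam) ^ m * Np ^ m - (E lam) ^ (m + 1) * Np ^ (m + 1) := by
      intro m
      rw [sub_mul]
      congr 1
      · rw [pow_succ' (E lam) m, ← mul_assoc, ← mul_assoc, hED, one_mul]
      · rw [← mul_assoc, ← ((hcomm lam).pow_left (m + 1)).eq, mul_assoc, ← pow_succ']
    calc ∑ m ∈ Finset.range N,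
          (Matrix.diagonal (fun k => lam - d k) - Np) * ((E lam) ^ (m + 1) * Np ^ m)
        = ∑ m ∈ Finset.range N,
            ((E lam) ^ m * Np ^ m - (E lam) ^ (m + 1) * Np ^ (m + 1)) :=
          Finset.sum_congr rfl fun m _ => step m
      _ = (E lam) ^ 0 * Np ^ 0 - (E lam) ^ N * Np ^ N := Finset.sum_range_sub' _ N
      _ = 1 := by rw [hNpN]; simp
  -- points on / inside the circle avoid the diagonal entries
  have hsphere : ∀ lam ∈ Metric.sphere z ε, ∀ k, lam ≠ d k := by
    intro lam hlam k
    rw [Metric.mem_sphere, Complex.dist_eq] at hlam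
    rcases eq_or_ne (d k) z with h | h
    · intro e
      rw [e, h, sub_self, norm_zero] at hlam
      exact absurd hlam.symm (ne_of_gt hε)
    · intro e
      have : ε < ‖d k - z‖ := hfar k h
      rw [← e, hlam] at this
      exact lt_irrefl _ this
  set c : ℕ → ℂ := fun m => (Np ^ m) i j with hc
  have hdi : d i ∉ Metric.sphere z ε := by
    intro hmem
    exact hsphere (d i) hmem i rfl
  -- rewrite the integrand on the sphere
  have hint : circleIntegral
        (fun lam => ((lam • (1 : Matrix (Fin N) (Fin N) ℂ) - A)⁻¹) i j) z ε
      = ∮ lam in C(z, ε),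
          ∑ m ∈ Finset.range N, (lam - d i) ^ (-(m + 1 : ℕ) : ℤ) * c m := by
    apply circleIntegral.integral_congr hε.le
    intro lam hlam
    show ((lam • (1 : Matrix (Fin N) (Fin N) ℂ) - A)⁻¹) i j = _
    rw [hinv lam (hsphere lam hlam), Matrix.sum_apply]
    apply Finset.sum_congr rfl
    intro m _
    rw [hE]
    rw [Matrix.diagonal_pow, Matrix.diagonal_mul, Pi.pow_apply]
    rw [inv_pow, ← zpow_natCast (lam - d i) (m + 1), ← _root_.zpow_neg]
  have hmulconst : ∀ (f : ℂ → ℂ) (a : ℂ),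
      (∮ lam in C(z, ε), f lam * a) = (∮ lam in C(z, ε), f lam) * a := by
    intro f a
    simpa only [smul_eq_mul] using circleIntegral.integral_smul_const f a z ε
  have hintegrable : ∀ m ∈ Finset.range N,
      CircleIntegrable (fun lam => (lam - d i) ^ (-(m + 1 : ℕ) : ℤ) * c m) z ε := by
    intro m _
    apply ContinuousOn.circleIntegrable hε.le
    exact (((continuousOn_id.sub continuousOn_const).zpow₀ _
      (fun lam hlam => Or.inl (sub_ne_zero.mpr (hsphere lam hlam i)))).mul continuousOn_const)
  have hterm : ∀ m ∈ Finset.range N,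
      (∮ lam in C(z, ε), (lam - d i) ^ (-(m + 1 : ℕ) : ℤ) * c m)
        = if m = 0 ∧ d i = z then (2 * Real.pi * Complex.I) * c 0 else 0 := by
    intro m _
    rw [hmulconst]
    rcases Nat.eq_zero_or_pos m with rfl | hm
    · have hfun : (fun lam : ℂ => (lam - d i) ^ (-(0 + 1 : ℕ) : ℤ))
          = fun lam => (lam - d i)⁻¹ := by
        funext lam
        norm_num
      rcases eq_or_ne (d i) z with hz' | hz'
      · rw [if_pos ⟨rfl, hz'⟩, hfun, hz',
          circleIntegral.integral_sub_inv_of_mem_ball (Metric.mem_ball_self hε)]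
      · rw [if_neg (by tauto)]
        have hzero : (∮ lam in C(z, ε), (lam - d i)⁻¹) = 0 := by
          have hout : ∀ lam ∈ Metric.closedBall z ε, lam ≠ d i := by
            intro lam hlam e
            have h1 : ‖lam - z‖ ≤ ε := by
              rwa [Metric.mem_closedBall, Complex.dist_eq] at hlam
            have h2 : ε < ‖d i - z‖ := hfar i hz'
            rw [e] at h1
            linarith
          apply circleIntegral_eq_zero_of_differentiable_on_off_countable hε.le
            Set.countable_empty
          · exact (continuousOn_id.sub continuousOn_const).inv₀
              fun lam hlam => sub_ne_zero.mpr (hout lam hlam)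
          · intro lam hlam
            exact (differentiableAt_id.sub_const _).inv
              (sub_ne_zero.mpr (hout lam (Metric.ball_subset_closedBall hlam.1)))
        rw [hfun, hzero, zero_mul]
    · rw [if_neg (fun h => absurd h.1 (by omega)),
          circleIntegral.integral_sub_zpow_of_ne (by omega) z (d i) ε, zero_mul]
  rw [hint, circleIntegral_finset_sum _ _ _ _ hintegrable,
    Finset.sum_congr rfl hterm]
  have hc0 : c 0 = if i = j then 1 else 0 := by
    simp [hc, Matrix.one_apply]
  rcases eq_or_ne (d i) z with hz' | hz'
  · have : ∑ m ∈ Finset.range N,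
        (if m = 0 ∧ d i = z then (2 * Real.pi * Complex.I) * c 0 else 0)
          = (2 * Real.pi * Complex.I) * c 0 := by
      rw [Finset.sum_eq_single 0]
      · simp [hz']
      · intro m _ hm
        simp [hm]
      · intro h
        exact absurd (Finset.mem_range.mpr (by omega)) h
    rw [this, inv_mul_cancel_left₀ Complex.two_pi_I_ne_zero, hc0]
    have hAz : A i i = z := hz'
    simp [hAz]
  · have : ∑ m ∈ Finset.range N,
        (if m = 0 ∧ d i = z then (2 * Real.pi * Complex.I) * c 0 else 0) = 0 := by
      apply Finset.sum_eq_zero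
      intro m _
      simp [hz']
    rw [this, mul_zero]
    have hAz : A i i ≠ z := hz'
    simp [hAz]
end

section
/- Let n ≥ 1, C > 0, h > 0, K > 0, and let α ∈ ℕⁿ be a multi-index. Then ∫_{{x ∈ ℂⁿ : ‖x‖ > K}} (∏_{j=1}^n |x_j|^{2α_j}) exp(−(2C/h)‖x‖²) dL(x) ≤ n · exp(−CK²/(nh)) · (h/C)^{n+|α|} · πⁿ · α!, where dL is Lebesgue measure on ℂⁿ ≅ ℝ^{2n}, ‖x‖² = Σ_j |x_j|², α! = ∏_j α_j!, and |α| = Σ_j α_j. -/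
open MeasureTheory Complex

open Real Set in
private lemma stmt8_gauss_int {b : ℝ} (hb : 0 < b) :
    Integrable (fun z : ℂ => Real.exp (-b * ‖z‖ ^ 2)) := by
  have h := (GaussianFourier.integrable_cexp_neg_mul_sq_norm_add (V := ℂ) (b := (b : ℂ))
    (by simpa using hb) 0 0).norm
  refine h.congr (Filter.Eventually.of_forall fun z => ?_)
  simp [Complex.norm_exp, ← Complex.ofReal_pow]

open Real Set in
private lemma stmt8_moment (a : ℕ) {c : ℝ} (hc : 0 < c) :
    ∫ z : ℂ, ‖z‖ ^ (2 * a) * Real.exp (-c * ‖z‖ ^ 2)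
      = π * a.factorial / c ^ (a + 1) := by
  have h := Complex.integral_rpow_mul_exp_neg_mul_rpow (p := 2) (q := (2 * a : ℕ)) one_le_two
    (by have : (0:ℝ) ≤ ((2*a:ℕ):ℝ) := Nat.cast_nonneg _; linarith) hc
  rw [show ((2:ℝ)) = ((2:ℕ):ℝ) by norm_num] at h
  simp_rw [Real.rpow_natCast] at h
  rw [h,
    show (-(((2*a:ℕ):ℝ) + ((2:ℕ):ℝ)))/((2:ℕ):ℝ) = -(((a:ℕ):ℝ)+1) by push_cast; ring,
    show ((((2*a:ℕ):ℝ)) + ((2:ℕ):ℝ))/((2:ℕ):ℝ) = ((a:ℕ):ℝ)+1 by push_cast; ring,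
    Real.rpow_neg hc.le, Real.Gamma_nat_eq_factorial,
    show (((a:ℕ):ℝ)+1) = ((a+1:ℕ):ℝ) by push_cast; ring, Real.rpow_natCast]
  have : (0:ℝ) < c ^ (a+1) := by positivity
  field_simp

open Real Set in
private lemma stmt8_Fint (a : ℕ) {c : ℝ} (hc : 0 < c) :
    Integrable (fun z : ℂ => ‖z‖ ^ (2 * a) * Real.exp (-c * ‖z‖ ^ 2)) := by
  have hb2 : 0 < c / 2 := half_pos hc
  have hbase := (stmt8_gauss_int hb2).const_mul ((2/c)^a * (a.factorial : ℝ))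
  refine Integrable.mono' hbase ?_ (Filter.Eventually.of_forall fun z => ?_)
  · exact ((continuous_norm.pow _).mul (Real.continuous_exp.comp
      (continuous_const.mul (continuous_norm.pow 2)))).aestronglyMeasurable
  · rw [Real.norm_eq_abs, _root_.abs_of_nonneg (by positivity)]
    set t : ℝ := ‖z‖ ^ 2 with ht
    have ht0 : 0 ≤ t := sq_nonneg _
    have h1 : ((c/2) * t) ^ a / (a.factorial : ℝ) ≤ Real.exp ((c/2) * t) :=
      Real.pow_div_factorial_le_exp _ (by positivity) a
    have h3 : t ^ a ≤ (2/c)^a * (a.factorial : ℝ) * Real.exp ((c/2) * t) := by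
      rw [div_le_iff₀ (by positivity), mul_pow] at h1
      have e2 : t ^ a = (2/c)^a * ((c/2)^a * t^a) := by
        rw [← mul_assoc, ← mul_pow, div_mul_div_comm, mul_comm (2:ℝ) c,
          div_self (by positivity), one_pow, one_mul]
      calc t ^ a = (2/c)^a * ((c/2)^a * t^a) := e2
        _ ≤ (2/c)^a * (Real.exp ((c/2)*t) * (a.factorial : ℝ)) := by
            apply mul_le_mul_of_nonneg_left h1 (by positivity)
        _ = (2/c)^a * (a.factorial : ℝ) * Real.exp ((c/2) * t) := by ring
    have key : t ^ a * Real.exp (-c * t) ≤ (2/c)^a * (a.factorial : ℝ) * Real.exp (-(c/2) * t) := by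
      calc t ^ a * Real.exp (-c * t)
          ≤ ((2/c)^a * (a.factorial : ℝ) * Real.exp ((c/2)*t)) * Real.exp (-c*t) :=
            mul_le_mul_of_nonneg_right h3 (Real.exp_pos _).le
        _ = (2/c)^a * (a.factorial : ℝ) * Real.exp (-(c/2) * t) := by
            rw [mul_assoc, ← Real.exp_add, show c/2*t + -c*t = -(c/2)*t by ring]
    calc ‖z‖ ^ (2 * a) * Real.exp (-c * t)
        = t ^ a * Real.exp (-c * t) := by rw [ht, ← pow_mul]
      _ ≤ (2/c)^a * (a.factorial : ℝ) * Real.exp (-(c/2) * t) := key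

open Real Set in
/-- the tail bound
`∫_{‖x‖>K} ∏ |x_j|^{2α_j} exp(−(2C/h)‖x‖²) dL(x) ≤ n e^{−CK²/(nh)} (h/C)^{n+|α|} πⁿ α!`. -/
theorem stmt8 (n : ℕ) (hn : 1 ≤ n) (C h K : ℝ) (hC : 0 < C) (hh : 0 < h) (hK : 0 < K)
    (α : Fin n → ℕ) :
    (∫ x in {x : Fin n → ℂ | K < Real.sqrt (∑ j, ‖x j‖ ^ 2)},
        (∏ j, ‖x j‖ ^ (2 * α j)) *
          Real.exp (-(2 * C / h) * ∑ j, ‖x j‖ ^ 2)) ≤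
      (n : ℝ) * Real.exp (-C * K ^ 2 / (n * h)) * (h / C) ^ (n + ∑ j, α j) *
        Real.pi ^ n * (∏ j, (Nat.factorial (α j) : ℝ)) := by
  have hn' : (0:ℝ) < n := by exact_mod_cast hn
  have hc0 : 0 < C / h := by positivity
  have hb0 : 0 < 2 * C / h := by positivity
  set b : ℝ := 2 * C / h with hb
  set E : ℝ := Real.exp (-C * K ^ 2 / (n * h)) with hE
  set f : (Fin n → ℂ) → ℝ := fun x => (∏ j, ‖x j‖ ^ (2 * α j)) *
      Real.exp (-b * ∑ j, ‖x j‖ ^ 2) with hf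
  set F : Fin n → ℂ → ℝ := fun j z =>
      ‖z‖ ^ (2 * α j) * Real.exp (-(C/h) * ‖z‖ ^ 2) with hF
  have hsplit : ∀ (c' : ℝ) (x : Fin n → ℂ),
      (∏ j, ‖x j‖ ^ (2 * α j)) * Real.exp (-c' * ∑ j, ‖x j‖ ^ 2)
        = ∏ j, (‖x j‖ ^ (2 * α j) * Real.exp (-c' * ‖x j‖ ^ 2)) := by
    intro c' x
    rw [Finset.mul_sum, Real.exp_sum, ← Finset.prod_mul_distrib]
  have hf_nonneg : ∀ x, 0 ≤ f x := by
    intro x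
    apply mul_nonneg _ (Real.exp_pos _).le
    exact Finset.prod_nonneg fun j _ => by positivity
  have hf_int : Integrable f := by
    have := MeasureTheory.Integrable.fintype_prod
      (f := fun j (z : ℂ) => ‖z‖ ^ (2 * α j) * Real.exp (-b * ‖z‖ ^ 2))
      (fun j => stmt8_Fint (α j) hb0)
    exact this.congr (Filter.Eventually.of_forall fun x => (hsplit b x).symm)
  have hG_int : Integrable (fun x : Fin n → ℂ => ∏ j, F j (x j)) :=
    MeasureTheory.Integrable.fintype_prod (f := F) (fun j => stmt8_Fint (α j) hc0)
  set T : Set (Fin n → ℂ) := {x | K < Real.sqrt (∑ j, ‖x j‖ ^ 2)} with hT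
  set S : Fin n → Set (Fin n → ℂ) :=
      fun j => {x | K ^ 2 / n ≤ ‖x j‖ ^ 2} with hS
  have habs_meas : ∀ j : Fin n, Measurable fun x : Fin n → ℂ => ‖x j‖ ^ 2 :=
    fun j => (continuous_norm.comp (continuous_apply j)).measurable.pow_const 2
  have hT_meas : MeasurableSet T := by
    apply measurableSet_lt measurable_const
    exact (Finset.measurable_sum _ fun j _ => habs_meas j).sqrt
  have hS_meas : ∀ j, MeasurableSet (S j) :=
    fun j => measurableSet_le measurable_const (habs_meas j)
  -- Step 1 : pointwise indicator bound
  have hind : ∀ x, T.indicator f x ≤ ∑ j, (S j).indicator f x := by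
    intro x
    by_cases hx : x ∈ T
    · rw [Set.indicator_of_mem hx]
      have hxT : K < Real.sqrt (∑ j, ‖x j‖ ^ 2) := hx
      have h0 : (0:ℝ) ≤ ∑ j, ‖x j‖ ^ 2 :=
        Finset.sum_nonneg fun j _ => sq_nonneg _
      have hsum : K ^ 2 < ∑ j, ‖x j‖ ^ 2 := by
        nlinarith [Real.sq_sqrt h0, Real.sqrt_nonneg (∑ j, ‖x j‖ ^ 2)]
      obtain ⟨j, hj⟩ : ∃ j, K ^ 2 / n ≤ ‖x j‖ ^ 2 := by
        by_contra hcon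
        push_neg at hcon
        have hne : (Finset.univ : Finset (Fin n)).Nonempty := by
          rw [Finset.univ_nonempty_iff]
          exact Fin.pos_iff_nonempty.mp hn
        have hlt : ∑ j, ‖x j‖ ^ 2 < ∑ _j : Fin n, K ^ 2 / n :=
          Finset.sum_lt_sum_of_nonempty hne fun j _ => hcon j
        rw [Finset.sum_const, Finset.card_univ, Fintype.card_fin, nsmul_eq_mul] at hlt
        rw [mul_div_cancel₀ _ (ne_of_gt hn')] at hlt
        linarith
      have hxS : x ∈ S j := hj
      calc f x = (S j).indicator f x := (Set.indicator_of_mem hxS f).symm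
        _ ≤ ∑ i, (S i).indicator f x :=
          Finset.single_le_sum
            (fun i _ => Set.indicator_nonneg (fun y _ => hf_nonneg y) x) (Finset.mem_univ j)
    · rw [Set.indicator_of_notMem hx]
      exact Finset.sum_nonneg fun j _ =>
        Set.indicator_nonneg (fun y _ => hf_nonneg y) x
  have step1 : (∫ x in T, f x) ≤ ∑ j, ∫ x in S j, f x := by
    calc (∫ x in T, f x) = ∫ x, T.indicator f x := (integral_indicator hT_meas).symm
      _ ≤ ∫ x, ∑ j, (S j).indicator f x :=
          integral_mono (hf_int.indicator hT_meas)
            (integrable_finset_sum Finset.univ fun j _ => hf_int.indicator (hS_meas j)) hind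
      _ = ∑ j, ∫ x, (S j).indicator f x :=
          integral_finset_sum _ (fun j _ => hf_int.indicator (hS_meas j))
      _ = ∑ j, ∫ x in S j, f x :=
          Finset.sum_congr rfl fun j _ => integral_indicator (hS_meas j)
  -- Step 2 : bound on each piece
  have step2 : ∀ j, (∫ x in S j, f x) ≤ E * ∫ x : Fin n → ℂ, ∏ i, F i (x i) := by
    intro j
    have hpt : ∀ x ∈ S j, f x ≤ E * ∏ i, F i (x i) := by
      intro x hx
      have hxj : K ^ 2 / n ≤ ‖x j‖ ^ 2 := hx
      set Ssum : ℝ := ∑ i, ‖x i‖ ^ 2 with hSsum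
      have htj_le : ‖x j‖ ^ 2 ≤ Ssum := by
        rw [hSsum]
        exact Finset.single_le_sum (f := fun i => ‖x i‖ ^ 2)
          (fun i _ => sq_nonneg _) (Finset.mem_univ j)
      have hexp : Real.exp (-b * Ssum) ≤ E * Real.exp (-(C/h) * Ssum) := by
        rw [hE, ← Real.exp_add]
        apply Real.exp_le_exp.mpr
        have hA : (C/h) * (K ^ 2 / n) ≤ (C/h) * ‖x j‖ ^ 2 :=
          mul_le_mul_of_nonneg_left hxj hc0.le
        have hB : (C/h) * ‖x j‖ ^ 2 ≤ (C/h) * Ssum :=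
          mul_le_mul_of_nonneg_left htj_le hc0.le
        have heq : -C * K ^ 2 / (n * h) = -((C/h) * (K ^ 2 / n)) := by
          field_simp
        have hb2 : -b * Ssum = -((C/h) * Ssum) - ((C/h) * Ssum) := by rw [hb]; ring
        linarith
      have hprod_nonneg : (0:ℝ) ≤ ∏ i, ‖x i‖ ^ (2 * α i) :=
        Finset.prod_nonneg fun i _ => by positivity
      calc f x = (∏ i, ‖x i‖ ^ (2 * α i)) * Real.exp (-b * Ssum) := rfl
        _ ≤ (∏ i, ‖x i‖ ^ (2 * α i)) * (E * Real.exp (-(C/h) * Ssum)) :=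
            mul_le_mul_of_nonneg_left hexp hprod_nonneg
        _ = E * ((∏ i, ‖x i‖ ^ (2 * α i)) * Real.exp (-(C/h) * Ssum)) := by ring
        _ = E * ∏ i, F i (x i) := by rw [hSsum, hsplit (C/h) x]
    calc (∫ x in S j, f x) ≤ ∫ x in S j, E * ∏ i, F i (x i) :=
          setIntegral_mono_on hf_int.integrableOn (hG_int.const_mul E).integrableOn
            (hS_meas j) hpt
      _ ≤ ∫ x : Fin n → ℂ, E * ∏ i, F i (x i) := by
          apply setIntegral_le_integral (hG_int.const_mul E)
          apply Filter.Eventually.of_forall fun x => ?_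
          have : (0:ℝ) ≤ ∏ i, F i (x i) :=
            Finset.prod_nonneg fun i _ => mul_nonneg (by positivity) (Real.exp_pos _).le
          have hE0 : (0:ℝ) ≤ E := (Real.exp_pos _).le
          positivity
      _ = E * ∫ x : Fin n → ℂ, ∏ i, F i (x i) := integral_const_mul _ _
  -- value of the full-space integral
  have hI : (∫ x : Fin n → ℂ, ∏ i, F i (x i))
      = ∏ i, (Real.pi * ((α i).factorial : ℝ) / (C/h) ^ (α i + 1)) := by
    rw [MeasureTheory.integral_fintype_prod_volume_eq_prod (f := F)]
    exact Finset.prod_congr rfl fun i _ => stmt8_moment (α i) hc0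
  have hP : (∏ i, (Real.pi * ((α i).factorial : ℝ) / (C/h) ^ (α i + 1)))
      = Real.pi ^ n * (h / C) ^ (n + ∑ j, α j) * ∏ j, ((α j).factorial : ℝ) := by
    have h1 : ∀ i : Fin n, Real.pi * ((α i).factorial : ℝ) / (C/h) ^ (α i + 1)
        = Real.pi * ((α i).factorial : ℝ) * (h/C) ^ (α i + 1) := by
      intro i
      rw [div_eq_mul_inv, ← inv_pow, inv_div]
    simp_rw [h1]
    rw [Finset.prod_mul_distrib, Finset.prod_mul_distrib, Finset.prod_const,
      Finset.card_univ, Fintype.card_fin, Finset.prod_pow_eq_pow_sum,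
      show ∑ j, (α j + 1) = (n + ∑ j, α j) by
        rw [Finset.sum_add_distrib, Finset.sum_const, Finset.card_univ, Fintype.card_fin,
          smul_eq_mul, mul_one]; omega]
    ring
  calc (∫ x in T, f x) ≤ ∑ j, ∫ x in S j, f x := step1
    _ ≤ ∑ _j : Fin n, E * ∫ x : Fin n → ℂ, ∏ i, F i (x i) :=
        Finset.sum_le_sum fun j _ => step2 j
    _ = (n : ℝ) * (E * ∫ x : Fin n → ℂ, ∏ i, F i (x i)) := by
        rw [Finset.sum_const, Finset.card_univ, Fintype.card_fin, nsmul_eq_mul]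
    _ = (n : ℝ) * E * (h / C) ^ (n + ∑ j, α j) * Real.pi ^ n *
          ∏ j, ((α j).factorial : ℝ) := by
        rw [hI, hP]; ring
end

section
/- Let Φ : ℂⁿ → ℝ be a strictly convex real-valued quadratic weight, Φ(x) = Re(x·Sx) + x·(H x̄) with S symmetric, H Hermitian, and Φ(x) > 0 for x ≠ 0, and let α ∈ ℕⁿ be a multi-index. Then ∫_{ℂⁿ} ∏_{j=1}^n |x_j|^{2α_j} e^{−2Φ(x)} dL(x) = 2^{|α|+n−1} (|α|+n−1)! ∫_{{‖ω‖=1}} ∏_{j=1}^n |ω_j|^{2α_j} (4Φ(ω))^{−|α|−n} dσ(ω), where dL is Lebesgue measure on ℂⁿ and dσ the induced surface measure on the unit sphere. -/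
open Matrix MeasureTheory Complex
open scoped ENNReal

/-- The real-valued quadratic weight `Φ(x) = Re(x·Sx) + x·(H x̄)` on `ℂⁿ`
(for `H` Hermitian the second term is real, so we take its real part). -/
noncomputable def quadWeight (n : ℕ) (S H : Matrix (Fin n) (Fin n) ℂ)
    (x : Fin n → ℂ) : ℝ :=
  (x ⬝ᵥ (S *ᵥ x)).re + (x ⬝ᵥ (H *ᵥ (star x))).re

/-- The unit sphere of `ℂⁿ ≅ ℝ^{2n}` (with the Euclidean norm). -/
def unitSphereC (n : ℕ) : Type :=
  {ω : Fin n → ℂ // ∑ j, ‖ω j‖ ^ 2 = 1}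

noncomputable instance (n : ℕ) : MeasurableSpace (unitSphereC n) :=
  Subtype.instMeasurableSpace

lemma quadWeight_continuous (n : ℕ) (S H : Matrix (Fin n) (Fin n) ℂ) :
    Continuous (quadWeight n S H) := by
  have : quadWeight n S H = fun x =>
      (∑ i, x i * ∑ j, S i j * x j).re + (∑ i, x i * ∑ j, H i j * star (x j)).re := by
    funext x
    simp [quadWeight, dotProduct, Matrix.mulVec]
  rw [this]
  fun_prop

lemma quadWeight_smul (n : ℕ) (S H : Matrix (Fin n) (Fin n) ℂ) (r : ℝ) (ω : Fin n → ℂ) :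
    quadWeight n S H (fun j => (r : ℂ) * ω j) = r ^ 2 * quadWeight n S H ω := by
  have hω : (fun j => (r : ℂ) * ω j) = (r : ℂ) • ω := rfl
  rw [hω]
  simp only [quadWeight, smul_dotProduct, Matrix.mulVec_smul, dotProduct_smul,
    star_smul, Complex.star_def, Complex.conj_ofReal, smul_eq_mul]
  ring_nf
  simp only [← Complex.ofReal_pow, Complex.re_ofReal_mul]

lemma lintegral_r_aux (k : ℕ) (hk : 1 ≤ k) {b : ℝ} (hb : 0 < b) :
    ∫⁻ r in Set.Ioi (0:ℝ), ENNReal.ofReal (r ^ (2*k-1) * Real.exp (-b * r^2)) =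
      ENNReal.ofReal ((Nat.factorial (k-1) : ℝ) / (2 * b ^ k)) := by
  have hs : (-1 : ℝ) < ((2*k-1 : ℕ) : ℝ) := lt_of_lt_of_le (by norm_num) (Nat.cast_nonneg _)
  have hInt : IntegrableOn (fun r : ℝ => r ^ (((2*k-1:ℕ)):ℝ) * Real.exp (-b * r^2))
      (Set.Ioi 0) := integrableOn_rpow_mul_exp_neg_mul_sq hb hs
  have heq : ∀ r ∈ Set.Ioi (0:ℝ),
      ENNReal.ofReal (r ^ (2*k-1) * Real.exp (-b * r^2)) =
      ENNReal.ofReal (r ^ (((2*k-1:ℕ)):ℝ) * Real.exp (-b * r^2)) := by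
    intro r hr
    rw [Real.rpow_natCast]
  rw [setLIntegral_congr_fun measurableSet_Ioi heq]
  rw [← ofReal_integral_eq_lintegral_ofReal hInt]
  · congr 1
    have h2 : ∀ r ∈ Set.Ioi (0:ℝ),
        r ^ (((2*k-1:ℕ)):ℝ) * Real.exp (-b * r^2) =
        r ^ (((2*k-1:ℕ)):ℝ) * Real.exp (-b * r ^ (2:ℝ)) := by
      intro r hr
      rw [Real.rpow_two]
    rw [setIntegral_congr_fun measurableSet_Ioi h2,
      integral_rpow_mul_exp_neg_mul_rpow two_pos hs hb]
    have hcast : (((2*k-1:ℕ):ℝ) + 1) / 2 = (k : ℝ) := by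
      have : ((2*k-1:ℕ):ℝ) = 2*k - 1 := by
        push_cast [Nat.cast_sub (by omega : 1 ≤ 2*k)]; ring
      rw [this]; ring
    have hgamma : Real.Gamma ((((2*k-1:ℕ):ℝ) + 1) / 2) = (Nat.factorial (k-1) : ℝ) := by
      rw [hcast]
      have : (k : ℝ) = ((k-1 : ℕ) : ℝ) + 1 := by
        push_cast [Nat.cast_sub hk]; ring
      rw [this, Real.Gamma_nat_eq_factorial]
    rw [hgamma]
    have hbk : b ^ (-((((2*k-1:ℕ):ℝ) + 1)) / 2) = (b ^ k)⁻¹ := by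
      rw [neg_div, hcast, ← Real.rpow_natCast b k, ← Real.rpow_neg hb.le]
    rw [hbk]
    ring
  · filter_upwards [self_mem_ae_restrict measurableSet_Ioi] with r hr
    have : (0:ℝ) < r := hr
    positivity

/-- the polar-coordinates evaluation
`∫_{ℂⁿ} ∏ |x_j|^{2α_j} e^{−2Φ} dL = 2^{|α|+n−1}(|α|+n−1)! ∫_{‖ω‖=1} ∏ |ω_j|^{2α_j} (4Φ(ω))^{−|α|−n} dσ(ω)`
for a strictly convex real-valued quadratic weight `Φ`, where `dσ` is the surface measure on
the unit sphere induced by Lebesgue measure (characterized by the polar-coordinates formula). -/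
theorem stmt11 (n : ℕ) (hn : 1 ≤ n) (S H : Matrix (Fin n) (Fin n) ℂ)
    (hS : Sᵀ = S) (hH : Hᴴ = H)
    (hconv : ∀ x : Fin n → ℂ, x ≠ 0 → 0 < quadWeight n S H x)
    (σm : Measure (unitSphereC n))
    (hpolar : ∀ f : (Fin n → ℂ) → ℝ≥0∞, Measurable f →
      (∫⁻ x : Fin n → ℂ, f x) =
        ∫⁻ r in Set.Ioi (0 : ℝ),
          (∫⁻ ω : unitSphereC n, f (fun j => (r : ℂ) * ω.1 j) ∂σm) *
            ENNReal.ofReal (r ^ (2 * n - 1)))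
    (α : Fin n → ℕ) :
    (∫ x : Fin n → ℂ,
        (∏ j, ‖x j‖ ^ (2 * α j)) * Real.exp (-2 * quadWeight n S H x)) =
      2 ^ ((∑ j, α j) + n - 1) * (Nat.factorial ((∑ j, α j) + n - 1) : ℝ) *
        ∫ ω : unitSphereC n,
          (∏ j, ‖ω.1 j‖ ^ (2 * α j)) *
            ((4 * quadWeight n S H ω.1) ^ ((∑ j, α j) + n))⁻¹ ∂σm := by
  classical
  have hΦc : Continuous (quadWeight n S H) := quadWeight_continuous n S H
  set Φ : (Fin n → ℂ) → ℝ := quadWeight n S H with hΦdef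
  set k : ℕ := (∑ j, α j) + n with hkdef
  have hk : 1 ≤ k := le_trans hn (Nat.le_add_left n _)
  -- points on the sphere are nonzero, so Φ is positive there
  have hω0 : ∀ ω : unitSphereC n, 0 < Φ ω.1 := by
    intro ω
    apply hconv
    intro h0
    have h2 := ω.2
    rw [h0] at h2
    simp at h2
  -- the monomial factor
  set P : (Fin n → ℂ) → ℝ := fun x => ∏ j, ‖x j‖ ^ (2 * α j) with hPdef
  have hPc : Continuous P := by
    apply continuous_finset_prod
    intro j _
    exact (continuous_norm.comp (continuous_apply j)).pow _
  have hP0 : ∀ x, 0 ≤ P x := fun x =>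
    Finset.prod_nonneg fun j _ => pow_nonneg (norm_nonneg _) _
  have hcoe : Measurable (fun ω : unitSphereC n => ω.1) := measurable_subtype_coe
  -- scaling of P
  have hPs : ∀ r : ℝ, 0 < r → ∀ ω : Fin n → ℂ,
      P (fun j => (r:ℂ) * ω j) = r ^ (2 * ∑ j, α j) * P ω := by
    intro r hr ω
    simp only [hPdef, _root_.norm_mul, Complex.norm_real, Real.norm_eq_abs, abs_of_pos hr, mul_pow,
      Finset.prod_mul_distrib, Finset.prod_pow_eq_pow_sum, ← Finset.mul_sum]
  -- σm is a finite measure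
  have hσfin : σm Set.univ < ⊤ := by
    set A : Set (Fin n → ℂ) := {x | (∑ j, ‖x j‖ ^ 2) ∈ Set.Icc (1:ℝ) 4} with hA
    have hsum_c : Continuous fun x : Fin n → ℂ => ∑ j, ‖x j‖ ^ 2 := by
      apply continuous_finset_sum
      intro j _
      exact (continuous_norm.comp (continuous_apply j)).pow _
    have hAmeas : MeasurableSet A := hsum_c.measurable measurableSet_Icc
    have hf : Measurable (A.indicator (1 : (Fin n → ℂ) → ℝ≥0∞)) :=
      measurable_one.indicator hAmeas
    have h1 := hpolar _ hf
    rw [lintegral_indicator_one hAmeas] at h1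
    -- the volume of A is finite
    have hAvol : volume A < ⊤ := by
      refine lt_of_le_of_lt (measure_mono ?_) (measure_closedBall_lt_top (x := (0 : Fin n → ℂ)) (r := 2))
      intro x hx
      rw [Metric.mem_closedBall, dist_zero_right]
      rw [pi_norm_le_iff_of_nonneg (by norm_num)]
      intro j
      have hj : ‖x j‖ ^ 2 ≤ 4 := by
        refine le_trans (Finset.single_le_sum (f := fun i => ‖x i‖ ^ 2) (fun i _ => by positivity) (Finset.mem_univ j)) hx.2
      have := norm_nonneg (x j)
      nlinarith
    -- lower bound for the RHS
    have hlow : σm Set.univ * volume (Set.Icc (1:ℝ) 2) ≤ volume A := by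
      rw [h1]
      calc σm Set.univ * volume (Set.Icc (1:ℝ) 2)
          = ∫⁻ _ in Set.Icc (1:ℝ) 2, σm Set.univ := (setLIntegral_const _ _).symm
        _ ≤ ∫⁻ r in Set.Icc (1:ℝ) 2,
              (∫⁻ ω : unitSphereC n,
                A.indicator (1 : (Fin n → ℂ) → ℝ≥0∞) (fun j => (r : ℂ) * ω.1 j) ∂σm) *
                ENNReal.ofReal (r ^ (2 * n - 1)) := by
            apply setLIntegral_mono' measurableSet_Icc
            intro r hr
            have hr1 : (1:ℝ) ≤ r := hr.1
            have hr0 : (0:ℝ) < r := by linarith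
            have hind : ∀ ω : unitSphereC n,
                A.indicator (1 : (Fin n → ℂ) → ℝ≥0∞) (fun j => (r : ℂ) * ω.1 j) = 1 := by
              intro ω
              rw [Set.indicator_of_mem]
              · rfl
              rw [hA, Set.mem_setOf_eq]
              have hsum : (∑ j, ‖(r:ℂ) * ω.1 j‖ ^ 2) = r ^ 2 := by
                have := ω.2
                simp only [_root_.norm_mul, Complex.norm_real, Real.norm_eq_abs, abs_of_pos hr0, mul_pow]
                rw [← Finset.mul_sum, this, mul_one]
              rw [hsum]
              constructor
              · nlinarith
              · nlinarith [hr.2]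
            simp only [hind]
            rw [lintegral_one]
            have hpow : (1:ℝ≥0∞) ≤ ENNReal.ofReal (r ^ (2 * n - 1)) := by
              rw [show (1:ℝ≥0∞) = ENNReal.ofReal 1 by simp]
              exact ENNReal.ofReal_le_ofReal (one_le_pow₀ hr1)
            calc σm Set.univ = σm Set.univ * 1 := (mul_one _).symm
              _ ≤ _ := mul_le_mul_right hpow _
        _ ≤ _ := lintegral_mono_set (fun r hr => lt_of_lt_of_le one_pos hr.1)
    rw [Real.volume_Icc] at hlow
    norm_num at hlow
    exact lt_of_le_of_lt hlow hAvol
  haveI : IsFiniteMeasure σm := ⟨hσfin⟩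
  -- the integrand
  set g : (Fin n → ℂ) → ℝ := fun x => P x * Real.exp (-2 * Φ x) with hgdef
  have hgc : Continuous g := hPc.mul (Real.continuous_exp.comp (by fun_prop))
  have hg0 : ∀ x, 0 ≤ g x := fun x => mul_nonneg (hP0 x) (Real.exp_nonneg _)
  -- F: the integrand after substitution
  set F : ℝ → unitSphereC n → ℝ≥0∞ := fun r ω =>
    ENNReal.ofReal (r ^ (2*k-1) * (P ω.1 * Real.exp (-(2 * Φ ω.1) * r ^ 2))) with hFdef
  have hFmeas : Measurable (Function.uncurry F) := by
    apply ENNReal.measurable_ofReal.comp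
    apply Measurable.mul
    · exact measurable_fst.pow_const _
    · apply Measurable.mul
      · exact hPc.measurable.comp (hcoe.comp measurable_snd)
      · apply Real.measurable_exp.comp
        exact ((measurable_const.mul
          (hΦc.measurable.comp (hcoe.comp measurable_snd))).neg).mul
          (measurable_fst.pow_const 2)
  -- step 1: Bochner integral to lintegral
  rw [integral_eq_lintegral_of_nonneg_ae (ae_of_all _ hg0) hgc.aestronglyMeasurable]
  -- step 2: polar coordinates
  rw [hpolar (fun x => ENNReal.ofReal (g x)) (ENNReal.measurable_ofReal.comp hgc.measurable)]
  -- step 3: rewrite the outer integrand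
  have hstep : ∀ r ∈ Set.Ioi (0:ℝ),
      (∫⁻ ω : unitSphereC n, ENNReal.ofReal (g (fun j => (r:ℂ) * ω.1 j)) ∂σm) *
        ENNReal.ofReal (r ^ (2 * n - 1))
      = ∫⁻ ω : unitSphereC n, F r ω ∂σm := by
    intro r hr
    have hr0 : (0:ℝ) < r := hr
    rw [← lintegral_mul_const' _ _ ENNReal.ofReal_ne_top]
    apply lintegral_congr
    intro ω
    rw [hFdef]
    rw [← ENNReal.ofReal_mul (hg0 _)]
    congr 1
    have h1 : g (fun j => (r:ℂ) * ω.1 j)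
        = r ^ (2 * ∑ j, α j) * P ω.1 * Real.exp (-(2 * Φ ω.1) * r ^ 2) := by
      rw [hgdef]
      simp only
      rw [hPs r hr0 ω.1, hΦdef, quadWeight_smul]
      ring_nf
    rw [h1]
    have hexp : 2*k-1 = (2 * ∑ j, α j) + (2*n-1) := by omega
    rw [hexp, pow_add]
    ring
  rw [setLIntegral_congr_fun measurableSet_Ioi hstep]
  -- step 4: swap the integrals
  rw [lintegral_lintegral_swap hFmeas.aemeasurable]
  -- step 5: compute the inner integral
  have hinner : ∀ ω : unitSphereC n,
      (∫⁻ r in Set.Ioi (0:ℝ), F r ω) =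
        ENNReal.ofReal (2 ^ (k-1) * (Nat.factorial (k-1) : ℝ)) *
          ENNReal.ofReal (P ω.1 * ((4 * Φ ω.1) ^ k)⁻¹) := by
    intro ω
    have hφ := hω0 ω
    have hb : 0 < 2 * Φ ω.1 := by linarith
    have e1 : ∀ r : ℝ, F r ω =
        ENNReal.ofReal (P ω.1) *
          ENNReal.ofReal (r ^ (2*k-1) * Real.exp (-(2 * Φ ω.1) * r ^ 2)) := by
      intro r
      rw [hFdef, ← ENNReal.ofReal_mul (hP0 _)]
      congr 1
      ring
    simp only [e1]
    rw [lintegral_const_mul' _ _ ENNReal.ofReal_ne_top, lintegral_r_aux k hk hb]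
    rw [← ENNReal.ofReal_mul (hP0 _), ← ENNReal.ofReal_mul (by positivity)]
    congr 1
    have h4 : (4 * Φ ω.1) ^ k ≠ 0 := by positivity
    have h2 : (2 * Φ ω.1) ^ k ≠ 0 := by positivity
    have hpow : ((4:ℝ) * Φ ω.1) ^ k = 2 ^ (k-1) * 2 * (2 * Φ ω.1) ^ k := by
      rw [show (4:ℝ) * Φ ω.1 = 2 * (2 * Φ ω.1) by ring, mul_pow]
      rw [show (2:ℝ) ^ (k-1) * 2 = 2 ^ k from by rw [← pow_succ]; congr 1; omega]
    rw [hpow]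
    field_simp
  rw [lintegral_congr hinner]
  rw [lintegral_const_mul' _ _ ENNReal.ofReal_ne_top]
  rw [ENNReal.toReal_mul, ENNReal.toReal_ofReal (by positivity)]
  -- step 6: RHS as a lintegral
  have hRHS0 : ∀ ω : unitSphereC n, 0 ≤ P ω.1 * ((4 * Φ ω.1) ^ k)⁻¹ := by
    intro ω
    have hφ := hω0 ω
    positivity
  have hRHSmeas : AEStronglyMeasurable
      (fun ω : unitSphereC n => P ω.1 * ((4 * Φ ω.1) ^ k)⁻¹) σm := by
    apply Measurable.aestronglyMeasurable
    apply Measurable.mul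
    · exact hPc.measurable.comp hcoe
    · exact (((measurable_const.mul (hΦc.measurable.comp hcoe)).pow_const k).inv)
  rw [integral_eq_lintegral_of_nonneg_ae (ae_of_all _ hRHS0) hRHSmeas]
end

section
/- Let a ∈ (0,1). Then, as N → ∞ through the natural numbers, √N · (1 − a)^{N+1} · ∫_0^{2π} (1 − a cos(2t))^{−(N+1)} dt converges to √(2π(1 − a)/a). -/
set_option maxHeartbeats 1000000

open Real Filter MeasureTheory Set

lemma pos18 (a : ℝ) (ha : 0 < a) (ha1 : a < 1) (t : ℝ) : 0 < 1 - a * Real.cos (2*t) := by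
  nlinarith [Real.cos_le_one (2*t), Real.neg_one_le_cos (2*t)]

lemma cont18 (a : ℝ) (ha : 0 < a) (ha1 : a < 1) (n : ℕ) :
    Continuous (fun t : ℝ => ((1 - a * Real.cos (2*t)) ^ (n+1))⁻¹) := by
  refine Continuous.inv₀ (by fun_prop) (fun t => pow_ne_zero _ (ne_of_gt (pos18 a ha ha1 t)))

lemma lem1 (a : ℝ) (ha : 0 < a) (ha1 : a < 1) (n : ℕ) :
    (∫ t in (0:ℝ)..(2*π), ((1 - a * Real.cos (2*t)) ^ (n+1))⁻¹) =
      2 * ∫ t in (-(π/2))..(π/2), ((1 - a * Real.cos (2*t)) ^ (n+1))⁻¹ := by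
  set F : ℝ → ℝ := fun t => ((1 - a * Real.cos (2*t)) ^ (n+1))⁻¹ with hF
  have hper : Function.Periodic F π := by
    intro t
    have : 2 * (t + π) = 2*t + 2*π := by ring
    simp [hF, this, Real.cos_add_two_pi]
  have hcont := cont18 a ha ha1 n
  have hii : ∀ u v : ℝ, IntervalIntegrable F volume u v := fun u v => hcont.intervalIntegrable u v
  have h1 : (∫ t in (0:ℝ)..(2*π), F t) = (∫ t in (0:ℝ)..π, F t) + ∫ t in π..(2*π), F t :=
    (intervalIntegral.integral_add_adjacent_intervals (hii 0 π) (hii π (2*π))).symm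
  have h2 : (∫ t in π..(2*π), F t) = ∫ t in (0:ℝ)..π, F t := by
    have := hper.intervalIntegral_add_eq π 0
    simpa [two_mul] using this
  have h3 : (∫ t in (0:ℝ)..π, F t) = ∫ t in (-(π/2))..(π/2), F t := by
    have := hper.intervalIntegral_add_eq 0 (-(π/2))
    have he : -(π/2) + π = π/2 := by ring
    rw [he] at this
    simpa using this
  rw [h1, h2, h3]; ring
lemma lem2 (a : ℝ) (ha : 0 < a) (ha1 : a < 1) (n : ℕ) :
    (∫ t in (-(π/2))..(π/2), ((1 - a * Real.cos (2*t)) ^ (n+1))⁻¹) =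
      ∫ x : ℝ, (1 + x^2)^n / ((1-a) + (1+a)*x^2)^(n+1) := by
  set G : ℝ → ℝ := fun x => (1 + x^2)^n / ((1-a) + (1+a)*x^2)^(n+1) with hG
  have hd : ∀ x ∈ Ioo (-(π/2)) (π/2),
      HasDerivWithinAt tan (1 / Real.cos x ^ 2) (Ioo (-(π/2)) (π/2)) x := fun x hx =>
    (Real.hasDerivAt_tan (ne_of_gt (Real.cos_pos_of_mem_Ioo hx))).hasDerivWithinAt
  have key := integral_image_eq_integral_abs_deriv_smul measurableSet_Ioo hd Real.injOn_tan G
  rw [Real.image_tan_Ioo, MeasureTheory.setIntegral_univ] at key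
  rw [key, intervalIntegral.integral_of_le (by linarith [pi_pos]),
    MeasureTheory.integral_Ioc_eq_integral_Ioo]
  refine setIntegral_congr_fun measurableSet_Ioo (fun t ht => ?_)
  have hc : 0 < Real.cos t := Real.cos_pos_of_mem_Ioo ht
  have hc2 : (0:ℝ) < Real.cos t ^ 2 := by positivity
  have htan : Real.tan t = Real.sin t / Real.cos t := Real.tan_eq_sin_div_cos t
  have hs := Real.sin_sq_add_cos_sq t
  have hkey : (1-a) + (1+a) * Real.tan t ^ 2 = (1 - a * Real.cos (2*t)) / Real.cos t ^ 2 := by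
    rw [htan, Real.cos_two_mul, div_pow]
    field_simp
    linear_combination (1+a) * hs
  have h1t : 1 + Real.tan t ^ 2 = (Real.cos t ^ 2)⁻¹ := by
    rw [htan, div_pow]
    field_simp
    linear_combination hs
  have hpos : 0 < 1 - a * Real.cos (2*t) := by
    nlinarith [Real.cos_le_one (2*t), Real.neg_one_le_cos (2*t)]
  simp only [hG, h1t, hkey, smul_eq_mul, abs_of_pos (by positivity : (0:ℝ) < 1 / Real.cos t ^ 2)]
  rw [div_pow]
  field_simp
  ring_nf
  rw [mul_assoc, ← mul_pow, mul_inv_cancel₀ hc.ne', one_pow, mul_one]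
lemma lem3 (a : ℝ) (ha : 0 < a) (ha1 : a < 1) (N : ℕ) (hN : 1 ≤ N) :
    Real.sqrt N * (1-a)^(N+1) * ∫ x : ℝ, (1 + x^2)^N / ((1-a) + (1+a)*x^2)^(N+1)
      = ∫ y : ℝ, (1 + y^2/N)^N / (1 + ((1+a)/(1-a))*(y^2/N))^(N+1) := by
  have h1a : (0:ℝ) < 1 - a := by linarith
  have hNpos : (0:ℝ) < (N:ℝ) := by exact_mod_cast hN
  have hsq : (0:ℝ) < Real.sqrt N := Real.sqrt_pos.mpr hNpos
  set G : ℝ → ℝ := fun x => (1 + x^2)^N / ((1-a) + (1+a)*x^2)^(N+1) with hG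
  have key := MeasureTheory.Measure.integral_comp_div G (Real.sqrt N)
  rw [abs_of_pos hsq, smul_eq_mul] at key
  calc Real.sqrt N * (1-a)^(N+1) * ∫ x : ℝ, G x
      = (1-a)^(N+1) * (Real.sqrt N * ∫ x : ℝ, G x) := by ring
    _ = (1-a)^(N+1) * ∫ x : ℝ, G (x / Real.sqrt N) := by rw [key]
    _ = ∫ x : ℝ, (1-a)^(N+1) * G (x / Real.sqrt N) := (MeasureTheory.integral_const_mul _ _).symm
    _ = ∫ y : ℝ, (1 + y^2/N) ^ N / (1 + ((1+a)/(1-a))*(y^2/N))^(N+1) := ?_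
  refine integral_congr_ae (Filter.EventuallyEq.of_eq (funext fun y => ?_))
  have hy2 : (y / Real.sqrt N)^2 = y^2 / N := by
    rw [div_pow, Real.sq_sqrt (le_of_lt hNpos)]
  simp only [hG, hy2]
  have hden : (1-a) + (1+a)*(y^2/N) = (1-a) * (1 + ((1+a)/(1-a))*(y^2/N)) := by
    field_simp
  have hdpos : (0:ℝ) < 1 + ((1+a)/(1-a))*(y^2/N) := by positivity
  rw [hden, mul_pow, div_mul_eq_div_div, div_div, ← mul_div_assoc,
    mul_div_mul_left _ _ (by positivity : ((1-a):ℝ)^(N+1) ≠ 0)]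
-- pointwise bound
lemma bnd18 (a : ℝ) (ha : 0 < a) (ha1 : a < 1) (N : ℕ) (hN : 1 ≤ N) (y : ℝ) :
    (1 + y^2/N)^N / (1 + ((1+a)/(1-a))*(y^2/N))^(N+1)
      ≤ Real.exp (-(a*y^2)) + (2/(a*((1+a)/(1-a)))) * (1+y^2)⁻¹ := by
  have h1a : (0:ℝ) < 1 - a := by linarith
  set c : ℝ := (1+a)/(1-a) with hcdef
  have hc : 1 < c := by rw [hcdef, lt_div_iff₀ h1a]; linarith
  have hc0 : 0 < c := by linarith
  have hcc : c * (1-a) = 1 + a := by rw [hcdef]; field_simp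
  have hcid : c - 1 - a = a * c := by nlinarith
  have hN1 : (1:ℝ) ≤ (N:ℝ) := by exact_mod_cast hN
  have hNpos : (0:ℝ) < (N:ℝ) := by exact_mod_cast hN
  set u : ℝ := y^2/N with hudef
  have hu0 : 0 ≤ u := by positivity
  have huN : u * N = y^2 := by rw [hudef]; field_simp
  have hcu : (0:ℝ) < 1 + c*u := by nlinarith
  have hsplit : (1 + u)^N / (1 + c*u)^(N+1) = ((1+u)/(1+c*u))^N * (1+c*u)⁻¹ := by
    rw [pow_succ, div_pow, div_mul_eq_div_div]
    ring
  rw [hsplit]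
  by_cases hcase : y^2 ≤ N
  · -- u ≤ 1 : bound by exp (-a y²)
    have hu1 : u ≤ 1 := by rw [hudef, div_le_one hNpos]; exact hcase
    have step : (1+u)/(1+c*u) ≤ Real.exp (-(a*u)) := by
      have h2 : -(a*u) + 1 ≤ Real.exp (-(a*u)) := Real.add_one_le_exp _
      have h3 : (1+u)/(1+c*u) ≤ 1 - a*u := by
        rw [div_le_iff₀ hcu]
        nlinarith [mul_nonneg (mul_nonneg (mul_pos ha hc0).le hu0) (sub_nonneg.mpr hu1)]
      linarith
    have hfrac0 : (0:ℝ) ≤ (1+u)/(1+c*u) := by positivity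
    have step2 : ((1+u)/(1+c*u))^N ≤ Real.exp (-(a*u)) ^ N := pow_le_pow_left₀ hfrac0 step N
    have step3 : Real.exp (-(a*u)) ^ N = Real.exp (-(a*y^2)) := by
      rw [← Real.exp_nat_mul]
      congr 1
      rw [← huN]; ring
    have hinv : (1+c*u)⁻¹ ≤ 1 := by
      rw [inv_le_one_iff₀]; right; nlinarith
    have : ((1+u)/(1+c*u))^N * (1+c*u)⁻¹ ≤ Real.exp (-(a*y^2)) * 1 := by
      apply mul_le_mul (step3 ▸ step2) hinv (by positivity) (by positivity)
    have hpos2 : 0 ≤ (2/(a*c)) * (1+y^2)⁻¹ := by positivity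
    nlinarith
  · -- y² > N : bound by (2/(ac)) (1+y²)⁻¹
    push_neg at hcase
    have hu1 : 1 ≤ u := by rw [hudef, le_div_iff₀ hNpos]; nlinarith
    have hy1 : 1 ≤ y^2 := by linarith
    have step : (1+u)/(1+c*u) ≤ Real.exp (-a) := by
      have h2 : -a + 1 ≤ Real.exp (-a) := Real.add_one_le_exp _
      have h3 : (1+u)/(1+c*u) ≤ 1 - a := by
        rw [div_le_iff₀ hcu]
        nlinarith
      linarith
    have hfrac0 : (0:ℝ) ≤ (1+u)/(1+c*u) := by positivity
    have step2 : ((1+u)/(1+c*u))^N ≤ Real.exp (-a) ^ N := pow_le_pow_left₀ hfrac0 step N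
    have step3 : Real.exp (-a) ^ N = Real.exp (-(a*N)) := by
      rw [← Real.exp_nat_mul]; congr 1; ring
    have hNexp : (N:ℝ) * Real.exp (-(a*N)) ≤ 1/a := by
      have h4 : a*N + 1 ≤ Real.exp (a*N) := Real.add_one_le_exp _
      have h5 : (N:ℝ) ≤ Real.exp (a*N) / a := by
        rw [le_div_iff₀ ha, mul_comm]
        linarith
      calc (N:ℝ) * Real.exp (-(a*N)) ≤ (Real.exp (a*N)/a) * Real.exp (-(a*N)) := by
            apply mul_le_mul_of_nonneg_right h5 (le_of_lt (Real.exp_pos _))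
        _ = 1/a := by rw [Real.exp_neg]; field_simp
    have hinv : (1+c*u)⁻¹ ≤ (N:ℝ) * (c*y^2)⁻¹ := by
      have h6 : 1 + c*u = ((N:ℝ) + c*y^2)/N := by
        rw [hudef]; field_simp
      rw [h6, inv_div]
      calc (N:ℝ)/((N:ℝ)+c*y^2) ≤ (N:ℝ)/(c*y^2) := by
            gcongr
            linarith
        _ = (N:ℝ) * (c*y^2)⁻¹ := div_eq_mul_inv _ _
    have key : ((1+u)/(1+c*u))^N * (1+c*u)⁻¹ ≤ Real.exp (-(a*N)) * ((N:ℝ) * (c*y^2)⁻¹) := by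
      apply mul_le_mul (step3 ▸ step2) hinv (by positivity) (by positivity)
    have key2 : Real.exp (-(a*N)) * ((N:ℝ) * (c*y^2)⁻¹) ≤ (1/a) * (c*y^2)⁻¹ := by
      rw [← mul_assoc, mul_comm (Real.exp _)]
      apply mul_le_mul_of_nonneg_right hNexp (by positivity)
    have key3 : (1/a) * (c*y^2)⁻¹ ≤ (2/(a*c)) * (1+y^2)⁻¹ := by
      have h8 : (1+y^2) ≤ 2*y^2 := by nlinarith
      have h9 : (1/a) * (c*y^2)⁻¹ = (2/(a*c)) * (2*y^2)⁻¹ := by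
        field_simp
      have h10 : (2*y^2:ℝ)⁻¹ ≤ (1+y^2)⁻¹ := by
        apply inv_anti₀ (by positivity) h8
      rw [h9]
      exact mul_le_mul_of_nonneg_left h10 (by positivity)
    have hpos2 : (0:ℝ) ≤ Real.exp (-(a*y^2)) := le_of_lt (Real.exp_pos _)
    nlinarith

lemma lem4 (a : ℝ) (ha : 0 < a) (ha1 : a < 1) :
    Tendsto (fun N : ℕ => ∫ y : ℝ, (1 + y^2/N)^N / (1 + ((1+a)/(1-a))*(y^2/N))^(N+1)) atTop
      (nhds (∫ y : ℝ, Real.exp (-(2*a/(1-a)) * y^2))) := by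
  have h1a : (0:ℝ) < 1 - a := by linarith
  have hc0 : (0:ℝ) < (1+a)/(1-a) := by positivity
  apply MeasureTheory.tendsto_integral_filter_of_dominated_convergence
    (bound := fun y => Real.exp (-(a*y^2)) + (2/(a*((1+a)/(1-a)))) * (1+y^2)⁻¹)
  · refine Filter.Eventually.of_forall (fun N => Continuous.aestronglyMeasurable ?_)
    refine Continuous.div (by fun_prop) (by fun_prop) (fun y => ?_)
    have : (0:ℝ) < 1 + ((1+a)/(1-a))*(y^2/N) := by positivity
    positivity
  · filter_upwards [eventually_ge_atTop 1] with N hN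
    refine Filter.Eventually.of_forall (fun y => ?_)
    rw [Real.norm_of_nonneg (by positivity)]
    exact bnd18 a ha ha1 N hN y
  · have := (integrable_exp_neg_mul_sq ha).add
      ((integrable_inv_one_add_sq).const_mul (2/(a*((1+a)/(1-a)))))
    simpa [neg_mul, Pi.add_def] using this
  · refine Filter.Eventually.of_forall (fun y => ?_)
    have hnum := Real.tendsto_one_add_div_pow_exp (y^2)
    have hden := Real.tendsto_one_add_div_pow_exp (((1+a)/(1-a))*y^2)
    have hden2 : Tendsto (fun N : ℕ => 1 + ((1+a)/(1-a))*y^2/N) atTop (nhds 1) := by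
      have := (tendsto_const_div_atTop_nhds_zero_nat (((1+a)/(1-a))*y^2)).const_add 1
      simpa using this
    have hcomb := hnum.div (hden.mul hden2)
      (by positivity : Real.exp (((1+a)/(1-a))*y^2) * 1 ≠ 0)
    have heq : (fun N : ℕ => (1 + y^2/N)^N / (1 + ((1+a)/(1-a))*(y^2/N))^(N+1))
        = fun N : ℕ => (1 + y^2/N)^N / ((1 + ((1+a)/(1-a))*y^2/N)^N * (1 + ((1+a)/(1-a))*y^2/N)) := by
      funext N
      rw [← mul_div_assoc, pow_succ _ N]
    rw [heq]
    convert hcomb using 2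
    case e'_3 => rfl
    rw [mul_one, ← Real.exp_sub]
    congr 1
    field_simp
    ring

/-- the Laplace-method asymptotic
`√N (1−a)^{N+1} ∫_0^{2π} (1 − a cos 2t)^{−(N+1)} dt → √(2π(1−a)/a)` as `N → ∞`. -/
theorem stmt18 (a : ℝ) (ha : 0 < a) (ha1 : a < 1) :
    Tendsto
      (fun N : ℕ =>
        Real.sqrt N * (1 - a) ^ (N + 1) *
          ∫ t in (0 : ℝ)..(2 * Real.pi), ((1 - a * Real.cos (2 * t)) ^ (N + 1))⁻¹)
      atTop (nhds (Real.sqrt (2 * Real.pi * (1 - a) / a))) := by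
  have h1a : (0:ℝ) < 1 - a := by linarith
  have hE : (fun N : ℕ =>
        Real.sqrt N * (1 - a) ^ (N + 1) *
          ∫ t in (0 : ℝ)..(2 * Real.pi), ((1 - a * Real.cos (2 * t)) ^ (N + 1))⁻¹)
      =ᶠ[atTop] fun N : ℕ =>
        2 * ∫ y : ℝ, (1 + y^2/N)^N / (1 + ((1+a)/(1-a))*(y^2/N))^(N+1) := by
    filter_upwards [eventually_ge_atTop 1] with N hN
    rw [lem1 a ha ha1 N, lem2 a ha ha1 N, ← lem3 a ha ha1 N hN]
    ring
  have hlim := (lem4 a ha ha1).const_mul 2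
  have hmain := Tendsto.congr' hE.symm hlim
  have hval : 2 * ∫ y : ℝ, Real.exp (-(2*a/(1-a)) * y^2)
      = Real.sqrt (2 * Real.pi * (1 - a) / a) := by
    rw [integral_gaussian (2*a/(1-a))]
    rw [show 2 * Real.pi * (1-a)/a = 4 * (Real.pi/(2*a/(1-a))) by field_simp; ring,
      Real.sqrt_mul (by norm_num : (0:ℝ) ≤ 4),
      show Real.sqrt 4 = 2 by
        rw [show (4:ℝ) = 2^2 by norm_num, Real.sqrt_sq (by norm_num : (0:ℝ) ≤ 2)]]
  rwa [hval] at hmain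
end
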